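/- arXiv:1306.5931 — 7 statements merged into one kernel-verified Lean document; each statement's English description precedes it below -/
import Mathlib

section
/- With notation as in the evolution system ω' = -2p, g' = -2q, J = g⁻¹ω, assume J(0)² = -I. Then J(t)² = -I for all t if and only if P^c(t) = Q^c(t) for all t (equivalently q^c = p^c(·,J·) for all t), where P^c, Q^c are the J(t)-invariant parts of P(t), Q(t). -/
open ContinuousLinearMap
open scoped RealInnerProductSpace

private lemma gronwall_zero_fwd {E : Type*} [NormedAddCommGroup E] [NormedSpace ℝ E]
    (f f' : ℝ → E) (b : ℝ → ℝ)
    (hf : ∀ t, HasDerivAt f (f' t) t) (hb : Continuous b)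
    (hbd : ∀ t, ‖f' t‖ ≤ b t * ‖f t‖) (h0 : f 0 = 0) :
    ∀ t ≥ (0:ℝ), f t = 0 := by
  intro t ht
  obtain ⟨C, hC⟩ := (isCompact_Icc (a := (0:ℝ)) (b := t)).exists_bound_of_continuousOn
    hb.continuousOn
  have key := norm_le_gronwallBound_of_norm_deriv_right_le (f := f) (f' := f') (δ := 0)
    (K := C) (ε := 0) (a := 0) (b := t)
    (fun s _ => (hf s).continuousAt.continuousWithinAt)
    (fun s _ => (hf s).hasDerivWithinAt)
    (by simp [h0])
    (fun s hs => by
      have h2 := hC s (Set.Ico_subset_Icc_self hs)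
      have h3 : b s ≤ C := by
        have : |b s| ≤ C := by simpa [Real.norm_eq_abs] using h2
        exact (le_abs_self _).trans this
      have h4 : b s * ‖f s‖ ≤ C * ‖f s‖ := mul_le_mul_of_nonneg_right h3 (norm_nonneg _)
      have := hbd s
      linarith)
  have := key t ⟨ht, le_refl t⟩
  rw [gronwallBound_ε0_δ0] at this
  exact norm_le_zero_iff.mp this

private lemma gronwall_zero {E : Type*} [NormedAddCommGroup E] [NormedSpace ℝ E]
    (f f' : ℝ → E) (b : ℝ → ℝ)
    (hf : ∀ t, HasDerivAt f (f' t) t) (hb : Continuous b)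
    (hbd : ∀ t, ‖f' t‖ ≤ b t * ‖f t‖) (h0 : f 0 = 0) :
    ∀ t, f t = 0 := by
  intro t
  rcases le_or_gt 0 t with ht | ht
  · exact gronwall_zero_fwd f f' b hf hb hbd h0 t ht
  · have hneg : ∀ s : ℝ, HasDerivAt (fun u : ℝ => f (-u)) (-f' (-s)) s := by
      intro s
      have h1 : HasDerivAt (fun u : ℝ => -u) (-1 : ℝ) s := (hasDerivAt_id s).neg
      have := (hf (-s)).scomp s h1
      simpa [Function.comp_def] using this
    have := gronwall_zero_fwd (fun u => f (-u)) (fun u => -f' (-u)) (fun u => b (-u))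
      hneg (hb.comp continuous_neg)
      (fun s => by simpa using hbd (-s)) (by simpa using h0) (-t) (by linarith)
    simpa using this

/-- Along a solution of `ω' = -2p`, `g' = -2q` with `ω = g(J·,·)` and `J(0)² = -I`,
compatibility is preserved, i.e. `J(t)² = -I` for all `t`, if and only if
`P^c(t) = Q^c(t)` for all `t` (the `J(t)`-invariant parts of `P`, `Q` coincide). -/
theorem compatibility_preserved_iff {V : Type*} [NormedAddCommGroup V]
    [InnerProductSpace ℝ V] [FiniteDimensional ℝ V]
    (ω g p q : ℝ → (V →L[ℝ] V →L[ℝ] ℝ)) (J P Q Jd : ℝ → (V →L[ℝ] V))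
    (hωJ : ∀ (t : ℝ) (X Y : V), ω t X Y = g t (J t X) Y)
    (hgpos : ∀ (t : ℝ) (X : V), X ≠ 0 → 0 < g t X X)
    (hp : ∀ (t : ℝ) (X Y : V), p t X Y = ω t (P t X) Y)
    (hq : ∀ (t : ℝ) (X Y : V), q t X Y = g t (Q t X) Y)
    (hω' : ∀ t : ℝ, HasDerivAt ω ((-2 : ℝ) • p t) t)
    (hg' : ∀ t : ℝ, HasDerivAt g ((-2 : ℝ) • q t) t)
    (hJ' : ∀ t : ℝ, HasDerivAt J (Jd t) t)
    (hPcont : Continuous P) (hQcont : Continuous Q)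
    (hJ0 : J 0 ∘L J 0 = -1) :
    (∀ t : ℝ, J t ∘L J t = -1) ↔
      (∀ t : ℝ, P t - J t ∘L P t ∘L J t = Q t - J t ∘L Q t ∘L J t) := by
  -- nondegeneracy of g
  have hgnd : ∀ (t : ℝ) (Z : V), (∀ Y, g t Z Y = 0) → Z = 0 := by
    intro t Z hZ
    by_contra h
    exact absurd (hZ Z) (ne_of_gt (hgpos t Z h))
  -- formula for the derivative of J
  have hJd : ∀ t, Jd t = (-2 : ℝ) • (J t ∘L P t) + (2:ℝ) • (Q t ∘L J t) := by
    intro t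
    have hωc : ω = fun s => (g s).comp (J s) := by
      funext s; ext X Y; exact hωJ s X Y
    have hD : HasDerivAt ω (((-2:ℝ) • q t).comp (J t) + (g t).comp (Jd t)) t := by
      rw [hωc]; exact (hg' t).clm_comp (hJ' t)
    have huniq : (-2 : ℝ) • p t = ((-2:ℝ) • q t).comp (J t) + (g t).comp (Jd t) :=
      HasDerivAt.unique (𝕜 := ℝ) (F := V →L[ℝ] V →L[ℝ] ℝ) (hω' t) hD
    ext X
    rw [← sub_eq_zero]
    apply hgnd t
    intro Y
    have h1 := DFunLike.congr_fun (DFunLike.congr_fun huniq X) Y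
    simp only [smul_apply, add_apply, comp_apply, smul_eq_mul] at h1
    rw [hp, hq, hωJ] at h1
    simp only [map_sub, map_add, map_smul, sub_apply, add_apply, smul_apply, comp_apply,
      smul_eq_mul]
    linarith
  constructor
  · -- forward direction
    intro hJ2 t
    have hK : HasDerivAt (fun s => J s ∘L J s) (Jd t ∘L J t + J t ∘L Jd t) t :=
      (hJ' t).clm_comp (hJ' t)
    have h0 : Jd t ∘L J t + J t ∘L Jd t = 0 := by
      have hconst : (fun s => J s ∘L J s) = fun _ => (-1 : V →L[ℝ] V) := funext hJ2
      rw [hconst] at hK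
      exact hK.unique (hasDerivAt_const t _)
    rw [hJd t] at h0
    have hJJ : ∀ Y : V, J t (J t Y) = -Y := by
      intro Y
      have := DFunLike.congr_fun (hJ2 t) Y
      simpa using this
    ext X
    have h0X := DFunLike.congr_fun h0 X
    simp only [add_apply, comp_apply, smul_apply, zero_apply, map_add, map_smul,
      sub_apply] at h0X ⊢
    simp only [hJJ, map_neg, smul_neg] at h0X
    linear_combination (norm := module) ((1:ℝ)/2) • h0X
  · -- reverse direction
    intro hc
    set K : ℝ → (V →L[ℝ] V) := fun s => J s ∘L J s + 1 with hKdef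
    have hK0 : K 0 = 0 := by
      simp only [hKdef, hJ0]
      exact neg_add_cancel 1
    have hK' : ∀ s, HasDerivAt K ((2:ℝ) • (Q s ∘L K s) - (2:ℝ) • (K s ∘L P s)) s := by
      intro s
      have hD : HasDerivAt K (Jd s ∘L J s + J s ∘L Jd s) s :=
        ((hJ' s).clm_comp (hJ' s)).add_const 1
      have heq : Jd s ∘L J s + J s ∘L Jd s
          = (2:ℝ) • (Q s ∘L K s) - (2:ℝ) • (K s ∘L P s) := by
        rw [hJd s]
        ext X
        have hcX := DFunLike.congr_fun (hc s) X
        simp only [sub_apply, comp_apply, add_apply, smul_apply, ContinuousLinearMap.one_apply, map_add,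
          map_smul, hKdef] at hcX ⊢
        linear_combination (norm := module) (2:ℝ) • hcX
      rw [← heq]; exact hD
    have hbcont : Continuous (fun s => 2 * ‖Q s‖ + 2 * ‖P s‖) :=
      (continuous_const.mul hQcont.norm).add (continuous_const.mul hPcont.norm)
    have hbd : ∀ s, ‖(2:ℝ) • (Q s ∘L K s) - (2:ℝ) • (K s ∘L P s)‖
        ≤ (2 * ‖Q s‖ + 2 * ‖P s‖) * ‖K s‖ := by
      intro s
      have h1 : ‖(2:ℝ) • (Q s ∘L K s)‖ ≤ 2 * (‖Q s‖ * ‖K s‖) := by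
        refine (norm_smul_le (2:ℝ) (Q s ∘L K s)).trans ?_
        have := opNorm_comp_le (Q s) (K s)
        have h2 : ‖(2:ℝ)‖ = 2 := by norm_num
        rw [h2]
        nlinarith [norm_nonneg (Q s ∘L K s)]
      have h3 : ‖(2:ℝ) • (K s ∘L P s)‖ ≤ 2 * (‖K s‖ * ‖P s‖) := by
        refine (norm_smul_le (2:ℝ) (K s ∘L P s)).trans ?_
        have := opNorm_comp_le (K s) (P s)
        have h2 : ‖(2:ℝ)‖ = 2 := by norm_num
        rw [h2]
        nlinarith [norm_nonneg (K s ∘L P s)]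
      have h4 := norm_sub_le ((2:ℝ) • (Q s ∘L K s)) ((2:ℝ) • (K s ∘L P s))
      nlinarith [norm_nonneg (K s)]
    have hzero := gronwall_zero K _ _ hK' hbcont hbd hK0
    intro t
    have h5 := hzero t
    simp only [hKdef] at h5
    exact eq_neg_of_add_eq_zero_left h5
end

section
/- Suppose the compatibility condition P^c = Q^c holds along a solution of ω' = -2p, g' = -2q with J² = -I. Then the almost-complex structure evolves by J' = -2J(P^{ac} + Q^{ac}). -/
open ContinuousLinearMap
open scoped RealInnerProductSpace

/-- If the compatibility `P^c = Q^c` holds along a solution of `ω' = -2p`, `g' = -2q`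
with `J² = -I`, then `J' = -2J(P^{ac} + Q^{ac})`. -/
theorem J_evolution_ac {V : Type*} [NormedAddCommGroup V] [InnerProductSpace ℝ V]
    [FiniteDimensional ℝ V]
    (ω g p q : ℝ → (V →L[ℝ] V →L[ℝ] ℝ)) (J P Q Jd : ℝ → (V →L[ℝ] V))
    (hωJ : ∀ (t : ℝ) (X Y : V), ω t X Y = g t (J t X) Y)
    (hgpos : ∀ (t : ℝ) (X : V), X ≠ 0 → 0 < g t X X)
    (hp : ∀ (t : ℝ) (X Y : V), p t X Y = ω t (P t X) Y)
    (hq : ∀ (t : ℝ) (X Y : V), q t X Y = g t (Q t X) Y)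
    (hω' : ∀ t : ℝ, HasDerivAt ω ((-2 : ℝ) • p t) t)
    (hg' : ∀ t : ℝ, HasDerivAt g ((-2 : ℝ) • q t) t)
    (hJ' : ∀ t : ℝ, HasDerivAt J (Jd t) t)
    (hJ2 : ∀ t : ℝ, J t ∘L J t = -1)
    -- compatibility `P^c = Q^c`
    (hcomp : ∀ t : ℝ, P t - J t ∘L P t ∘L J t = Q t - J t ∘L Q t ∘L J t) :
    ∀ t : ℝ, Jd t = (-2 : ℝ) • (J t ∘L
      ((1/2 : ℝ) • (P t + J t ∘L P t ∘L J t) + (1/2 : ℝ) • (Q t + J t ∘L Q t ∘L J t))) := by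
  intro t
  -- Step 1: differentiate ω = g(J·,·) pointwise
  have hderiv : ∀ X Y : V, g t (Jd t X) Y = -2 * p t X Y + 2 * q t (J t X) Y := by
    intro X Y
    have hJX : HasDerivAt (fun s => J s X) (Jd t X) t := by
      simpa using (hJ' t).clm_apply (hasDerivAt_const t X)
    have hgJX : HasDerivAt (fun s => g s (J s X))
        (((-2:ℝ) • q t) (J t X) + g t (Jd t X)) t := (hg' t).clm_apply hJX
    have h2 : HasDerivAt (fun s => g s (J s X) Y)
        ((((-2:ℝ) • q t) (J t X) + g t (Jd t X)) Y) t := by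
      simpa using hgJX.clm_apply (hasDerivAt_const t Y)
    have h1 : HasDerivAt (fun s => ω s X Y) (((-2:ℝ) • p t) X Y) t := by
      simpa using ((hω' t).clm_apply (hasDerivAt_const t X)).clm_apply (hasDerivAt_const t Y)
    have heq : (fun s => ω s X Y) = fun s => g s (J s X) Y := funext fun s => hωJ s X Y
    rw [heq] at h1
    have h3 := h1.unique h2
    simp only [ContinuousLinearMap.add_apply, ContinuousLinearMap.smul_apply,
      smul_eq_mul] at h3
    linarith
  -- Step 2: rewrite via P and Q to identify Jd = -2 J∘P + 2 Q∘J
  have hpt : ∀ X Y : V,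
      g t ((Jd t - ((-2:ℝ) • (J t ∘L P t) + (2:ℝ) • (Q t ∘L J t))) X) Y = 0 := by
    intro X Y
    have h4 : g t (Jd t X) Y
        = g t ((((-2:ℝ) • (J t ∘L P t) + (2:ℝ) • (Q t ∘L J t)) X)) Y := by
      rw [hderiv X Y, hp, hq, hωJ]
      simp only [ContinuousLinearMap.add_apply, ContinuousLinearMap.smul_apply,
        ContinuousLinearMap.comp_apply, map_add, map_smul, map_smulₛₗ, RingHom.id_apply,
        ContinuousLinearMap.smul_apply, smul_eq_mul]
    simp only [ContinuousLinearMap.sub_apply, map_sub, ContinuousLinearMap.sub_apply, h4,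
      sub_self]
  have hnd : ∀ Z : V, (∀ Y : V, g t Z Y = 0) → Z = 0 := by
    intro Z h
    by_contra hZ
    exact (hgpos t Z hZ).ne' (h Z)
  have hJd : Jd t = (-2:ℝ) • (J t ∘L P t) + (2:ℝ) • (Q t ∘L J t) := by
    ext X
    have := hnd _ (hpt X)
    rw [ContinuousLinearMap.sub_apply, sub_eq_zero] at this
    exact this
  -- Step 3: algebra using J² = -1 and compatibility
  rw [hJd]
  have hJ2t := hJ2 t
  have hcompt := hcomp t
  simp only [← ContinuousLinearMap.mul_def] at *
  have key : P t * J t + J t * P t = Q t * J t + J t * Q t := by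
    have h := congrArg (· * J t) hcompt
    simp only [sub_mul, mul_assoc, hJ2t, mul_neg_one, mul_neg, sub_neg_eq_add] at h
    exact h
  have hPJ : P t * J t = Q t * J t + J t * Q t - J t * P t := by
    rw [← key]; abel
  rw [mul_add, mul_smul_comm, mul_smul_comm, mul_add, mul_add]
  rw [show J t * (J t * (P t * J t)) = -(P t * J t) by
    rw [← mul_assoc, ← mul_assoc, hJ2t]; simp [neg_mul]]
  rw [show J t * (J t * (Q t * J t)) = -(Q t * J t) by
    rw [← mul_assoc, ← mul_assoc, hJ2t]; simp [neg_mul]]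
  rw [hPJ]
  module
end

section
/- Let μ(t) be a curve of bilinear alternating maps on ℝ^{2n} solving the bracket flow μ' = δ_μ(P_μ + Q_μ^{ac}) with μ(0) = [·,·] a Lie bracket, where the curvature operators satisfy the scaling law P_{cμ} + Q_{cμ}^{ac} = c²(P_μ + Q_μ^{ac}). If the maximal forward existence time T₊ is finite, then |μ(t)| ≥ C/(T₊ - t)^{1/2} for all t ∈ [0, T₊), for some constant C > 0 depending only on n. More precisely, one has |μ'| ≤ C₂|μ|³ and hence |μ(t)|² ≤ 1/(-2C₂(t-t₀) + |μ(t₀)|⁻²). -/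
open ContinuousLinearMap

/-- `δ_μ(A)(X,Y) = μ(AX,Y) + μ(X,AY) - Aμ(X,Y)`. -/
noncomputable def bracketDelta {V : Type*} [NormedAddCommGroup V] [NormedSpace ℝ V]
    (μ : V →L[ℝ] V →L[ℝ] V) (A : V →L[ℝ] V) : V →L[ℝ] V →L[ℝ] V :=
  μ.comp A + (μ.flip.comp A).flip - (ContinuousLinearMap.compL ℝ V V V A).comp μ

section Aux
open Set Filter Topology
variable {E : Type*} [NormedAddCommGroup E] [NormedSpace ℝ E]

lemma norm_bracketDelta_le (μ : E →L[ℝ] E →L[ℝ] E) (A : E →L[ℝ] E) :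
    ‖bracketDelta μ A‖ ≤ 3 * ‖μ‖ * ‖A‖ := by
  have h1 : ‖μ.comp A‖ ≤ ‖μ‖ * ‖A‖ := opNorm_comp_le _ _
  have h2 : ‖(μ.flip.comp A).flip‖ ≤ ‖μ‖ * ‖A‖ := by
    rw [opNorm_flip]
    refine (opNorm_comp_le _ _).trans ?_
    rw [opNorm_flip]
  have hc : ‖ContinuousLinearMap.compL ℝ E E E A‖ ≤ ‖A‖ :=
    opNorm_le_bound _ (norm_nonneg A) fun g => opNorm_comp_le _ _
  have h3 : ‖(ContinuousLinearMap.compL ℝ E E E A).comp μ‖ ≤ ‖A‖ * ‖μ‖ :=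
    (opNorm_comp_le _ _).trans (mul_le_mul_of_nonneg_right hc (norm_nonneg μ))
  have h4 := norm_sub_le (μ.comp A + (μ.flip.comp A).flip)
    ((ContinuousLinearMap.compL ℝ E E E A).comp μ)
  have h5 := norm_add_le (μ.comp A) ((μ.flip.comp A).flip)
  unfold bracketDelta
  nlinarith [norm_nonneg μ, norm_nonneg A]

lemma sqrt_inv_cube {D : ℝ} (hD : 0 < D) (K : ℝ) :
    K * ((Real.sqrt D)⁻¹) ^ 3 = K / (D * Real.sqrt D) := by
  have h3 : (Real.sqrt D) ^ 3 = D * Real.sqrt D := by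
    rw [pow_succ, Real.sq_sqrt hD.le]
  rw [inv_pow, h3, div_eq_mul_inv]

lemma flow_upper_aux {f φ : ℝ → E} {a b C₂ K A : ℝ} (hab : a ≤ b)
    (hd : ∀ x ∈ Icc a b, HasDerivAt f (φ x) x)
    (hb : ∀ x ∈ Icc a b, ‖φ x‖ ≤ C₂ * ‖f x‖ ^ 3)
    (hC₂ : 0 ≤ C₂) (hCK : C₂ < K) (hA2 : 2 * K * (b - a) < A) (hA : 0 < A)
    (hinit : ‖f a‖ ^ 2 * A ≤ 1) :
    ‖f b‖ ^ 2 * (A - 2 * K * (b - a)) ≤ 1 := by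
  set D : ℝ → ℝ := fun x => A - 2 * K * (x - a) with hDdef
  have hK : 0 < K := hC₂.trans_lt hCK
  have hDpos : ∀ x ∈ Icc a b, 0 < D x := by
    intro x hx
    have : 2 * K * (x - a) ≤ 2 * K * (b - a) := by nlinarith [hx.2]
    simp only [hDdef]; nlinarith
  set B : ℝ → ℝ := fun x => (Real.sqrt (D x))⁻¹ with hBdef
  set B' : ℝ → ℝ := fun x => K / (D x * Real.sqrt (D x)) with hB'def
  have hBderiv : ∀ x ∈ Icc a b, HasDerivAt B (B' x) x := by
    intro x hx
    have hDx := hDpos x hx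
    have hsx : 0 < Real.sqrt (D x) := Real.sqrt_pos.2 hDx
    have hd1 : HasDerivAt D (-(2 * K)) x := by
      have h := (hasDerivAt_const x A).sub (((hasDerivAt_id x).sub_const a).const_mul (2 * K))
      exact h.congr_deriv (by ring)
    have hd2 : HasDerivAt (fun y => Real.sqrt (D y)) (1 / (2 * Real.sqrt (D x)) * -(2 * K)) x :=
      (Real.hasDerivAt_sqrt hDx.ne').comp x hd1
    have hd3 := hd2.inv hsx.ne'
    refine hd3.congr_deriv ?_
    have hss : Real.sqrt (D x) * Real.sqrt (D x) = D x := Real.mul_self_sqrt hDx.le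
    simp only [hB'def]
    field_simp
    nlinarith [hss, hsx]
  have key : ∀ x ∈ Icc a b, ‖f x‖ ≤ B x := by
    apply image_norm_le_of_norm_deriv_right_lt_deriv_boundary'
      (fun x hx => (hd x hx).continuousAt.continuousWithinAt)
      (fun x hx => (hd x (Ico_subset_Icc_self hx)).hasDerivWithinAt)
      ?_ (fun x hx => (hBderiv x hx).continuousAt.continuousWithinAt)
      (fun x hx => (hBderiv x (Ico_subset_Icc_self hx)).hasDerivWithinAt)
    · intro x hx hfx
      have hx' := Ico_subset_Icc_self hx
      have hDx := hDpos x hx'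
      have hsx : 0 < Real.sqrt (D x) := Real.sqrt_pos.2 hDx
      have h1 : ‖φ x‖ ≤ C₂ * ‖f x‖ ^ 3 := hb x hx'
      have h2 : C₂ * ‖f x‖ ^ 3 < K * ‖f x‖ ^ 3 := by
        have : 0 < ‖f x‖ ^ 3 := by rw [hfx]; positivity
        exact mul_lt_mul_of_pos_right hCK this
      have h3 : K * ‖f x‖ ^ 3 = B' x := by
        rw [hfx]; simp only [hBdef, hB'def]; exact sqrt_inv_cube hDx K
      calc ‖φ x‖ ≤ C₂ * ‖f x‖ ^ 3 := h1
        _ < B' x := h3 ▸ h2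
    · have hDa : D a = A := by simp [hDdef]
      have h1 : ‖f a‖ ^ 2 ≤ A⁻¹ := by
        rw [← le_div_iff₀ hA] at hinit; simpa [one_div] using hinit
      have : ‖f a‖ ≤ Real.sqrt A⁻¹ := by
        have h2 := Real.sqrt_le_sqrt h1
        rwa [Real.sqrt_sq (norm_nonneg _)] at h2
      simpa [hBdef, hDa, Real.sqrt_inv] using this
  have hb' : ‖f b‖ ≤ (Real.sqrt (D b))⁻¹ := key b (right_mem_Icc.2 hab)
  have hDb : 0 < D b := hDpos b (right_mem_Icc.2 hab)
  have h2 : ‖f b‖ ^ 2 ≤ (D b)⁻¹ := by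
    have := pow_le_pow_left₀ (norm_nonneg _) hb' 2
    rwa [inv_pow, Real.sq_sqrt hDb.le] at this
  have : ‖f b‖ ^ 2 * D b ≤ (D b)⁻¹ * D b := mul_le_mul_of_nonneg_right h2 hDb.le
  rw [inv_mul_cancel₀ hDb.ne'] at this
  simpa [hDdef] using this

lemma neg_norm_slope {f : ℝ → E} {d : E} {x r : ℝ} (h : HasDerivAt f d x) (hr : ‖d‖ < r) :
    ∃ᶠ z in 𝓝[>] x, slope (fun y => -‖f y‖) x z < r := by
  have h1 : Tendsto (slope f x) (𝓝[>] x) (𝓝 d) := by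
    have := hasDerivWithinAt_iff_tendsto_slope.1 (h.hasDerivWithinAt (s := Set.Ioi x))
    rwa [Set.diff_singleton_eq_self (by simp)] at this
  have h2 : ∀ᶠ z in 𝓝[>] x, ‖slope f x z‖ < r := h1.norm.eventually_lt_const hr
  refine ((h2.and self_mem_nhdsWithin).mono ?_).frequently
  rintro z ⟨hz, hzx⟩
  have hzx' : (0:ℝ) < z - x := sub_pos.2 hzx
  have key : slope (fun y => -‖f y‖) x z ≤ ‖slope f x z‖ := by
    have e1 : slope (fun y => -‖f y‖) x z = (‖f x‖ - ‖f z‖) / (z - x) := by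
      rw [slope_def_field]; ring_nf
    have e2 : ‖slope f x z‖ = ‖f z - f x‖ / (z - x) := by
      rw [slope_def_module, norm_smul, norm_inv, Real.norm_eq_abs, abs_of_pos hzx',
        inv_mul_eq_div]
    rw [e1, e2]
    apply div_le_div_of_nonneg_right ?_ hzx'.le |>.trans_eq rfl
    exact (norm_sub_norm_le _ _).trans (norm_sub_rev (f x) (f z) ▸ le_rfl)
  exact key.trans_lt hz

lemma flow_lower_aux {f φ : ℝ → E} {a b C₂ K : ℝ}
    (hd : ∀ x ∈ Icc a b, HasDerivAt f (φ x) x)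
    (hb : ∀ x ∈ Icc a b, ‖φ x‖ ≤ C₂ * ‖f x‖ ^ 3)
    (hC₂ : 0 ≤ C₂) (hCK : C₂ < K) (h0 : f a ≠ 0) :
    ∀ x ∈ Icc a b, f x ≠ 0 := by
  have hK : 0 < K := hC₂.trans_lt hCK
  have hfa : 0 < ‖f a‖ := norm_pos_iff.2 h0
  set A : ℝ := (‖f a‖ ^ 2)⁻¹ with hAdef
  have hA : 0 < A := by positivity
  set D : ℝ → ℝ := fun x => A + 2 * K * (x - a) with hDdef
  have hDpos : ∀ x ∈ Icc a b, 0 < D x := by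
    intro x hx
    have : 0 ≤ x - a := sub_nonneg.2 hx.1
    simp only [hDdef]; nlinarith
  set B : ℝ → ℝ := fun x => -(Real.sqrt (D x))⁻¹ with hBdef
  set B' : ℝ → ℝ := fun x => K / (D x * Real.sqrt (D x)) with hB'def
  have hBderiv : ∀ x ∈ Icc a b, HasDerivAt B (B' x) x := by
    intro x hx
    have hDx := hDpos x hx
    have hsx : 0 < Real.sqrt (D x) := Real.sqrt_pos.2 hDx
    have hd1 : HasDerivAt D (2 * K) x := by
      have h := (hasDerivAt_const x A).add (((hasDerivAt_id x).sub_const a).const_mul (2 * K))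
      exact h.congr_deriv (by ring)
    have hd2 : HasDerivAt (fun y => Real.sqrt (D y)) (1 / (2 * Real.sqrt (D x)) * (2 * K)) x :=
      (Real.hasDerivAt_sqrt hDx.ne').comp x hd1
    have hd3 := (hd2.inv hsx.ne').neg
    refine hd3.congr_deriv ?_
    have hss : Real.sqrt (D x) * Real.sqrt (D x) = D x := Real.mul_self_sqrt hDx.le
    simp only [hB'def]
    field_simp
    nlinarith [hss, hsx]
  have key : ∀ x ∈ Icc a b, -‖f x‖ ≤ B x := by
    apply image_le_of_liminf_slope_right_lt_deriv_boundary'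
      (f' := fun x => ‖φ x‖)
      (f := fun x => -‖f x‖)
      (fun x hx => ((hd x hx).continuousAt.norm.neg).continuousWithinAt)
      (fun x hx r hr => neg_norm_slope (hd x (Ico_subset_Icc_self hx)) hr)
      ?_ (fun x hx => (hBderiv x hx).continuousAt.continuousWithinAt)
      (fun x hx => (hBderiv x (Ico_subset_Icc_self hx)).hasDerivWithinAt)
    · intro x hx hfx
      have hx' := Ico_subset_Icc_self hx
      have hDx := hDpos x hx'
      have hsx : 0 < Real.sqrt (D x) := Real.sqrt_pos.2 hDx
      have hfx' : ‖f x‖ = (Real.sqrt (D x))⁻¹ := by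
        simpa [hBdef] using hfx
      have h1 : ‖φ x‖ ≤ C₂ * ‖f x‖ ^ 3 := hb x hx'
      have h2 : C₂ * ‖f x‖ ^ 3 < K * ‖f x‖ ^ 3 := by
        have : 0 < ‖f x‖ ^ 3 := by rw [hfx']; positivity
        exact mul_lt_mul_of_pos_right hCK this
      have h3 : K * ‖f x‖ ^ 3 = B' x := by
        rw [hfx']; simp only [hB'def]; exact sqrt_inv_cube hDx K
      calc ‖φ x‖ ≤ C₂ * ‖f x‖ ^ 3 := h1
        _ < B' x := h3 ▸ h2
    · have hDa : D a = A := by simp [hDdef]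
      have : (Real.sqrt (D a))⁻¹ = ‖f a‖ := by
        rw [hDa, hAdef, Real.sqrt_inv, Real.sqrt_sq (norm_nonneg _), inv_inv]
      simp [hBdef, this]
  intro x hx
  have h1 := key x hx
  have hDx := hDpos x hx
  have hsx : 0 < Real.sqrt (D x) := Real.sqrt_pos.2 hDx
  have hpos : 0 < ‖f x‖ := by
    have h2 : (Real.sqrt (D x))⁻¹ ≤ ‖f x‖ := by
      simpa [hBdef] using h1
    exact lt_of_lt_of_le (by positivity) h2
  exact norm_pos_iff.1 hpos


lemma norm_pos_of_ne' {x : E} (h : x ≠ 0) : 0 < ‖x‖ := norm_pos_iff.2 h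

lemma norm_zero'' : ‖(0:E)‖ = 0 := norm_zero

lemma eq_zero_of_norm_sq_nonpos {x : E} (h : ‖x‖ ^ 2 ≤ 0) : x = 0 := by
  have h2 : ‖x‖ = 0 := by nlinarith [norm_nonneg x]
  exact norm_eq_zero.1 h2


lemma norm_eq_zero_of_eq {x : E} (h : x = 0) : ‖x‖ = 0 := by rw [h]; exact norm_zero

lemma flow_zero_aux {f φ : ℝ → E} {a b C₂ : ℝ} (hab : a ≤ b)
    (hd : ∀ x ∈ Icc a b, HasDerivAt f (φ x) x)
    (hb : ∀ x ∈ Icc a b, ‖φ x‖ ≤ C₂ * ‖f x‖ ^ 3)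
    (hC₂ : 0 ≤ C₂) (h0 : f a = 0) : f b = 0 := by
  have h1 : ∀ c : ℝ, 0 < c → ‖f b‖ ^ 2 ≤ c := by
    intro c hc
    have hΔ : 0 ≤ b - a := sub_nonneg.2 hab
    have hci : 0 < c⁻¹ := inv_pos.2 hc
    set A : ℝ := 2 * (C₂ + 1) * (b - a) + c⁻¹ with hAdef
    have hA2 : 2 * (C₂ + 1) * (b - a) < A := by rw [hAdef]; nlinarith
    have hA : 0 < A := by rw [hAdef]; nlinarith
    have hmain := flow_upper_aux hab hd hb hC₂ (lt_add_one C₂) hA2 hA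
      (by rw [h0]; simp)
    have h2 : A - 2 * (C₂ + 1) * (b - a) = c⁻¹ := by rw [hAdef]; ring
    rw [h2] at hmain
    calc ‖f b‖ ^ 2 = ‖f b‖ ^ 2 * c⁻¹ * c := by field_simp
      _ ≤ 1 * c := mul_le_mul_of_nonneg_right hmain hc.le
      _ = c := one_mul c
  have h2 : ‖f b‖ ^ 2 ≤ 0 := le_of_forall_pos_le_add (fun ε hε => by simpa using h1 ε hε)
  exact eq_zero_of_norm_sq_nonpos h2

lemma exists_quadratic_bound {W' : Type*} [NormedAddCommGroup W'] [NormedSpace ℝ W']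
    [ProperSpace E] (Efun : E → W') (hEcont : Continuous Efun)
    (hEscal : ∀ (c : ℝ) lam, Efun (c • lam) = c ^ 2 • Efun lam) :
    ∃ C' > 0, ∀ lam, ‖Efun lam‖ ≤ C' * ‖lam‖ ^ 2 := by
  obtain ⟨M, hM⟩ := (isCompact_sphere (0 : E) 1).exists_bound_of_continuousOn
    hEcont.continuousOn
  refine ⟨max M 0 + 1, by positivity, ?_⟩
  intro lam
  have hE0 : Efun 0 = 0 := by
    have h := hEscal 0 0
    simpa using h
  rcases eq_or_ne lam 0 with rfl | hlam
  · simp [hE0] <;> positivity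
  · have hr : 0 < ‖lam‖ := norm_pos_iff.2 hlam
    have hu : ‖lam‖⁻¹ • lam ∈ Metric.sphere (0 : E) 1 := by
      simp [mem_sphere_zero_iff_norm, norm_smul, abs_of_pos (inv_pos.2 hr),
        inv_mul_cancel₀ hr.ne']
    have h1 : Efun lam = ‖lam‖ ^ 2 • Efun (‖lam‖⁻¹ • lam) := by
      have h2 := hEscal ‖lam‖ (‖lam‖⁻¹ • lam)
      rw [smul_smul, mul_inv_cancel₀ hr.ne', one_smul] at h2
      exact h2
    rw [h1, norm_smul, Real.norm_eq_abs, abs_of_nonneg (sq_nonneg _)]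
    have h3 : ‖Efun (‖lam‖⁻¹ • lam)‖ ≤ M := hM _ hu
    have h4 : M ≤ max M 0 + 1 := by nlinarith [le_max_left M 0]
    nlinarith [sq_nonneg ‖lam‖]

end Aux


set_option maxHeartbeats 2000000 in
set_option synthInstance.maxHeartbeats 400000 in
/-- If the bracket flow `μ' = δ_μ(P_μ + Q_μ^{ac})` on `ℝ^{2n}` (with the scaling law
`E_{cμ} = c²E_μ` for `E_μ := P_μ + Q_μ^{ac}`) has a finite maximal forward existence
time `T₊` (so that `‖μ‖` blows up at `T₊`), then `‖μ(t)‖ ≥ C/(T₊-t)^{1/2}`; more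
precisely `‖μ'‖ ≤ C₂‖μ‖³` and `‖μ(t)‖⁻² ≥ ‖μ(t₀)‖⁻² - 2C₂(t-t₀)`. -/
theorem bracket_flow_lower_bound (n : ℕ) (hn : 0 < n) (T : ℝ) (hT : 0 < T)
    (μ : ℝ → (EuclideanSpace ℝ (Fin (2*n)) →L[ℝ] EuclideanSpace ℝ (Fin (2*n))
      →L[ℝ] EuclideanSpace ℝ (Fin (2*n))))
    (Efun : (EuclideanSpace ℝ (Fin (2*n)) →L[ℝ] EuclideanSpace ℝ (Fin (2*n))
      →L[ℝ] EuclideanSpace ℝ (Fin (2*n))) →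
      (EuclideanSpace ℝ (Fin (2*n)) →L[ℝ] EuclideanSpace ℝ (Fin (2*n))))
    (hEcont : Continuous Efun)
    (hEscal : ∀ (c : ℝ) lam, Efun (c • lam) = c^2 • Efun lam)
    -- `μ(0)` is a Lie bracket
    (halt : ∀ X, μ 0 X X = 0)
    (hjac : ∀ X Y Z, μ 0 X (μ 0 Y Z) + μ 0 Y (μ 0 Z X) + μ 0 Z (μ 0 X Y) = 0)
    -- the bracket flow on `[0, T₊)`
    (hflow : ∀ t ∈ Set.Ico (0:ℝ) T, HasDerivAt μ (bracketDelta (μ t) (Efun (μ t))) t)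
    -- `‖μ‖` blows up at the finite singularity `T₊ = T`
    (hblow : Filter.Tendsto (fun t => ‖μ t‖) (nhdsWithin T (Set.Iio T)) Filter.atTop) :
    (∃ C > 0, ∀ t ∈ Set.Ico (0:ℝ) T, C / Real.sqrt (T - t) ≤ ‖μ t‖) ∧
    (∃ C₂ > 0,
      (∀ t ∈ Set.Ico (0:ℝ) T, ‖bracketDelta (μ t) (Efun (μ t))‖ ≤ C₂ * ‖μ t‖^3) ∧
      (∀ t₀ ∈ Set.Ico (0:ℝ) T, ∀ t ∈ Set.Ico t₀ T,
        (‖μ t₀‖^2)⁻¹ - 2*C₂*(t - t₀) ≤ (‖μ t‖^2)⁻¹)) := by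
  classical
  haveI : FiniteDimensional ℝ (EuclideanSpace ℝ (Fin (2*n)) →L[ℝ] EuclideanSpace ℝ (Fin (2*n))
      →L[ℝ] EuclideanSpace ℝ (Fin (2*n))) := inferInstance
  haveI := FiniteDimensional.proper ℝ (EuclideanSpace ℝ (Fin (2*n)) →L[ℝ]
    EuclideanSpace ℝ (Fin (2*n)) →L[ℝ] EuclideanSpace ℝ (Fin (2*n)))
  obtain ⟨C', hC', hEb⟩ := exists_quadratic_bound Efun hEcont hEscal
  set C₂ : ℝ := 3 * C' with hC₂def
  have hC₂ : 0 < C₂ := by positivity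
  set φ : ℝ → _ := fun t => bracketDelta (μ t) (Efun (μ t)) with hφdef
  have hφb : ∀ t ∈ Set.Ico (0:ℝ) T, ‖φ t‖ ≤ C₂ * ‖μ t‖ ^ 3 := by
    intro t _
    calc ‖φ t‖ ≤ 3 * ‖μ t‖ * ‖Efun (μ t)‖ := norm_bracketDelta_le _ _
      _ ≤ 3 * ‖μ t‖ * (C' * ‖μ t‖ ^ 2) := by
          exact mul_le_mul_of_nonneg_left (hEb _) (by positivity)
      _ = C₂ * ‖μ t‖ ^ 3 := by rw [hC₂def]; ring
  have hderiv : ∀ a b : ℝ, 0 ≤ a → b < T → ∀ x ∈ Set.Icc a b, HasDerivAt μ (φ x) x :=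
    fun a b ha hbT x hx => hflow x ⟨ha.trans hx.1, lt_of_le_of_lt hx.2 hbT⟩
  have hbnd : ∀ a b : ℝ, 0 ≤ a → b < T → ∀ x ∈ Set.Icc a b, ‖φ x‖ ≤ C₂ * ‖μ x‖ ^ 3 :=
    fun a b ha hbT x hx => hφb x ⟨ha.trans hx.1, lt_of_le_of_lt hx.2 hbT⟩
  -- nonvanishing
  have hnz : ∀ t ∈ Set.Ico (0:ℝ) T, μ t ≠ 0 := by
    intro t₁ ht₁ h0
    have hzero : ∀ s ∈ Set.Ico t₁ T, μ s = 0 := by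
      intro s hs
      exact flow_zero_aux (f := μ) hs.1 (hderiv t₁ s ht₁.1 hs.2) (hbnd t₁ s ht₁.1 hs.2) hC₂.le h0
    have hev1 : ∀ᶠ s in nhdsWithin T (Set.Iio T), (1:ℝ) ≤ ‖μ s‖ :=
      hblow.eventually_ge_atTop 1
    have hev2 : Set.Ioo t₁ T ∈ nhdsWithin T (Set.Iio T) :=
      Ioo_mem_nhdsLT_of_mem ⟨ht₁.2, le_refl T⟩
    obtain ⟨s, hs1, hs2⟩ := (hev1.and (Filter.eventually_of_mem hev2 (fun x hx => hx))).exists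
    have hz : ‖μ s‖ = 0 := norm_eq_zero_of_eq (x := μ s) (hzero s ⟨hs2.1.le, hs2.2⟩)
    rw [hz] at hs1
    linarith
  -- key inequality
  have hkey : ∀ t₀ ∈ Set.Ico (0:ℝ) T, ∀ t ∈ Set.Ico t₀ T,
      (‖μ t₀‖^2)⁻¹ - 2*C₂*(t - t₀) ≤ (‖μ t‖^2)⁻¹ := by
    intro t₀ ht₀ t ht
    have ht' : t ∈ Set.Ico (0:ℝ) T := ⟨ht₀.1.trans ht.1, ht.2⟩
    have hn₀ : 0 < ‖μ t₀‖ := norm_pos_of_ne' (x := μ t₀) (hnz t₀ ht₀)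
    have hn₁ : 0 < ‖μ t‖ := norm_pos_of_ne' (x := μ t) (hnz t ht')
    set A : ℝ := (‖μ t₀‖^2)⁻¹ with hAdef
    have hA : 0 < A := by positivity
    rcases le_or_gt A (2*C₂*(t - t₀)) with hle | hlt
    · have h0 : (0:ℝ) ≤ (‖μ t‖^2)⁻¹ := by positivity
      linarith
    · rcases eq_or_lt_of_le ht.1 with rfl | htgt
      · simp [hAdef]
      · have hΔ : 0 < t - t₀ := sub_pos.2 htgt
        have hmain : ‖μ t‖^2 * (A - 2*C₂*(t - t₀)) ≤ 1 := by
          set ε₀ : ℝ := (A - 2*C₂*(t - t₀)) / (2*(t - t₀)) with hε₀def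
          have hε₀pos : 0 < ε₀ := div_pos (by linarith) (by linarith)
          have hev : ∀ ε ∈ Set.Ioo (0:ℝ) ε₀,
              ‖μ t‖^2 * (A - 2*(C₂+ε)*(t - t₀)) ≤ 1 := by
            intro ε hε
            have hA2 : 2*(C₂+ε)*(t - t₀) < A := by
              have h6 := hε.2
              rw [hε₀def, lt_div_iff₀ (by linarith : (0:ℝ) < 2*(t - t₀))] at h6
              nlinarith
            exact flow_upper_aux (f := μ) ht.1 (hderiv t₀ t ht₀.1 ht.2) (hbnd t₀ t ht₀.1 ht.2)
              hC₂.le (by linarith [hε.1]) hA2 hA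
              (le_of_eq (by rw [hAdef]; exact mul_inv_cancel₀ (pow_ne_zero 2 hn₀.ne')))
          have hcont : Continuous (fun ε : ℝ => ‖μ t‖^2 * (A - 2*(C₂+ε)*(t - t₀))) := by
            continuity
          have htend : Filter.Tendsto (fun ε : ℝ => ‖μ t‖^2 * (A - 2*(C₂+ε)*(t - t₀)))
              (nhdsWithin 0 (Set.Ioi 0)) (nhds (‖μ t‖^2 * (A - 2*(C₂+(0:ℝ))*(t - t₀)))) :=
            (hcont.tendsto 0).mono_left nhdsWithin_le_nhds
          have hle1 := le_of_tendsto htend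
            (Filter.eventually_of_mem (Ioo_mem_nhdsGT_of_mem ⟨le_refl (0:ℝ), hε₀pos⟩) hev)
          simpa using hle1
        have hsq : 0 < ‖μ t‖^2 := by positivity
        rw [← one_div, le_div_iff₀ hsq]
        nlinarith
  refine ⟨⟨Real.sqrt (1/(2*C₂)), Real.sqrt_pos.2 (by positivity), ?_⟩,
    C₂, hC₂, (fun t ht => hφb t ht), hkey⟩
  intro t ht
  have htT : t < T := ht.2
  have h2 : Filter.Tendsto (fun s => (‖μ s‖^2)⁻¹ + 2*C₂*(s - t))
      (nhdsWithin T (Set.Iio T)) (nhds (0 + 2*C₂*(T - t))) := by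
    apply Filter.Tendsto.add
    · have hsq : Filter.Tendsto (fun s => ‖μ s‖^2) (nhdsWithin T (Set.Iio T)) Filter.atTop := by
        have h5 := hblow.atTop_mul_atTop₀ hblow
        simpa [pow_two] using h5
      exact tendsto_inv_atTop_zero.comp hsq
    · exact (((continuous_const.mul (continuous_id.sub continuous_const)).tendsto T).mono_left
        nhdsWithin_le_nhds)
  have h3 : (‖μ t‖^2)⁻¹ ≤ 0 + 2*C₂*(T - t) := by
    apply ge_of_tendsto h2
    filter_upwards [Ioo_mem_nhdsLT_of_mem ⟨htT, le_refl T⟩] with s hs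
    have h6 := hkey t ht s ⟨hs.1.le, hs.2⟩
    linarith
  rw [zero_add] at h3
  have hnt : 0 < ‖μ t‖ := norm_pos_of_ne' (x := μ t) (hnz t ht)
  have hTt : 0 < T - t := sub_pos.2 htT
  have h4 : (2*C₂*(T - t))⁻¹ ≤ ‖μ t‖^2 := by
    have hx : 0 < (‖μ t‖^2)⁻¹ := by positivity
    have h5 := inv_anti₀ hx h3
    rwa [inv_inv] at h5
  have h6 : Real.sqrt ((2*C₂*(T - t))⁻¹) ≤ ‖μ t‖ := by
    have h7 := Real.sqrt_le_sqrt h4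
    have h8 : Real.sqrt (‖μ t‖^2) = ‖μ t‖ := Real.sqrt_sq hnt.le
    rwa [h8] at h7
  refine le_trans (le_of_eq ?_) h6
  rw [one_div, Real.sqrt_inv, Real.sqrt_inv,
    Real.sqrt_mul (by positivity : (0:ℝ) ≤ 2*C₂), mul_inv, div_eq_mul_inv]
end

section
/- Let (ω, g) be an almost-hermitian structure on a Lie algebra g whose curvature operators satisfy P + Q^{ac} = cI + D for some c ∈ ℝ and derivation D of g. Then (ω,g) is a (p,q)-soliton with the same c and D, i.e. P = cI + (1/2)(D - JD^tJ) and Q = cI + (1/2)(D + D^t). -/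
open ContinuousLinearMap

/-- Proposition 6.4 of the paper: if `P + Q^{ac} = cI + D` for a derivation `D`, then
`(ω, g)` is a `(p,q)`-soliton with the same `c` and `D`, i.e.
`P = cI + (1/2)(D - JD^tJ)` and `Q = cI + (1/2)(D + D^t)`. -/
theorem algebraic_soliton {V : Type*} [NormedAddCommGroup V] [InnerProductSpace ℝ V]
    [FiniteDimensional ℝ V]
    -- the Lie bracket
    (L : V →L[ℝ] V →L[ℝ] V)
    (halt : ∀ X : V, L X X = 0)
    (hjac : ∀ X Y Z : V, L X (L Y Z) + L Y (L Z X) + L Z (L X Y) = 0)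
    (J P Q D : V →L[ℝ] V) (c : ℝ)
    (hJ2 : J ∘L J = -1)
    (hJadj : ContinuousLinearMap.adjoint J = -J)
    -- `P^{t_ω} = P`, i.e. `P^t = -JPJ`
    (hPt : ContinuousLinearMap.adjoint P = -(J ∘L P ∘L J))
    -- `Q^t = Q`
    (hQt : ContinuousLinearMap.adjoint Q = Q)
    -- compatibility `P^c = Q^c`
    (hcomp : P - J ∘L P ∘L J = Q - J ∘L Q ∘L J)
    -- `D` is a derivation
    (hD : ∀ X Y : V, D (L X Y) = L (D X) Y + L X (D Y))
    -- the hypothesis `P + Q^{ac} = cI + D`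
    (hyp : P + (1/2 : ℝ) • (Q + J ∘L Q ∘L J) = c • (1 : V →L[ℝ] V) + D) :
    P = c • (1 : V →L[ℝ] V)
        + (1/2 : ℝ) • (D - J ∘L (ContinuousLinearMap.adjoint D) ∘L J) ∧
    Q = c • (1 : V →L[ℝ] V) + (1/2 : ℝ) • (D + ContinuousLinearMap.adjoint D) := by

  -- abbreviations
  have hJ2' : ∀ v : V, J (J v) = -v := by
    intro v
    have := DFunLike.congr_fun hJ2 v
    simpa using this
  have key : ∀ X : V →L[ℝ] V, J ∘L (J ∘L X ∘L J) ∘L J = X := by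
    intro X
    ext v
    simp [ContinuousLinearMap.comp_apply, hJ2']
  -- adjoint of the hypothesis
  have eq2 : -(J ∘L P ∘L J) + (1/2 : ℝ) • (Q + J ∘L Q ∘L J)
      = c • (1 : V →L[ℝ] V) + ContinuousLinearMap.adjoint D := by
    have h := congrArg (ContinuousLinearMap.adjoint (𝕜 := ℝ)) hyp
    simp only [map_add, map_smul, adjoint_comp, ContinuousLinearMap.one_def, adjoint_id,
      hPt, hQt, hJadj, comp_neg, neg_comp, neg_neg,
      ContinuousLinearMap.comp_assoc] at h
    simp only [ContinuousLinearMap.one_def]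
    linear_combination (norm := module) h
  have h4 : P + (J ∘L P ∘L J) = D - ContinuousLinearMap.adjoint D := by
    linear_combination (norm := module) hyp - eq2
  have h5 : (J ∘L P ∘L J) + P
      = (J ∘L D ∘L J) - (J ∘L (ContinuousLinearMap.adjoint D) ∘L J) := by
    have h := congrArg (fun X : V →L[ℝ] V => J ∘L X ∘L J) h4
    simp only [ContinuousLinearMap.comp_add, ContinuousLinearMap.add_comp,
      ContinuousLinearMap.comp_sub, ContinuousLinearMap.sub_comp] at h
    calc (J ∘L P ∘L J) + P = J ∘L (P + J ∘L P ∘L J) ∘L J := by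
          simp only [ContinuousLinearMap.add_comp, ContinuousLinearMap.comp_add, key]
      _ = J ∘L (D - ContinuousLinearMap.adjoint D) ∘L J := by rw [h4]
      _ = _ := by
          simp only [ContinuousLinearMap.sub_comp, ContinuousLinearMap.comp_sub]
  have hQ : Q = c • (1 : V →L[ℝ] V)
      + (1/2 : ℝ) • (D + ContinuousLinearMap.adjoint D) := by
    linear_combination (norm := module)
      (1/2 : ℝ) • hyp + (1/2 : ℝ) • eq2 - (1/2 : ℝ) • hcomp
  have h7 : J ∘L Q ∘L J = -(c • (1 : V →L[ℝ] V))
      + (1/2 : ℝ) • ((J ∘L D ∘L J) + (J ∘L (ContinuousLinearMap.adjoint D) ∘L J)) := by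
    rw [hQ]
    have hJJ : J ∘L (c • (1 : V →L[ℝ] V)) ∘L J = -(c • (1 : V →L[ℝ] V)) := by
      ext v; simp [ContinuousLinearMap.comp_apply, hJ2']
    simp only [ContinuousLinearMap.add_comp, ContinuousLinearMap.comp_add,
      ContinuousLinearMap.smul_comp, ContinuousLinearMap.comp_smul, hJJ]
    have h1J : (1 : V →L[ℝ] V) ∘L J = J := by ext v; simp
    rw [h1J, hJ2, smul_neg]
  refine ⟨?_, hQ⟩
  linear_combination (norm := module)
    (1/2 : ℝ) • hyp + (1/4 : ℝ) • hcomp + (1/4 : ℝ) • h5 - (1/2 : ℝ) • h7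
end

section
/- Along the Chern-Ricci flow ω(t) = ω₀((I - 2tP₀)·,·) on a Lie group, the Chern-Ricci operator evolves by P(t) = (I - 2tP₀)⁻¹P₀. Consequently, if P₀ has eigenvalues p₁,…,p_{2n}, the Chern scalar curvature is tr P(t) = Σᵢ pᵢ/(1 - 2tpᵢ), its derivative is Σᵢ 2pᵢ²/(1-2tpᵢ)² ≥ 0, so tr P(t) is non-decreasing, and strictly increasing unless P₀ = 0. Moreover, if T₊ < ∞ then ∫₀^{T₊} tr P(t) dt = ∞ and tr P(t) ≤ C/(T₊ - t) for some C > 0. -/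
open ContinuousLinearMap

/-- Along the Chern-Ricci flow `ω(t) = ω₀((I - 2tP₀)·,·)`, the Chern-Ricci operator
evolves by `P(t) = (I - 2tP₀)⁻¹P₀`; with eigenvalues `pᵢ` of `P₀`, the Chern scalar
curvature is `tr P(t) = Σᵢ pᵢ/(1-2tpᵢ)`, its derivative `Σᵢ 2pᵢ²/(1-2tpᵢ)² ≥ 0`, so it
is non-decreasing, strictly increasing unless `P₀ = 0`; and if `T₊ = 1/(2p₊) < ∞` then
`∫₀^{T₊} tr P dt = ∞` and `tr P(t) ≤ C/(T₊ - t)`. -/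
theorem chern_scalar_evolution {V : Type*} [NormedAddCommGroup V]
    [InnerProductSpace ℝ V] [FiniteDimensional ℝ V]
    (m : ℕ) (P₀ : V →L[ℝ] V)
    (hsym : ContinuousLinearMap.adjoint P₀ = P₀)
    -- an orthonormal eigenbasis of `P₀` with eigenvalues `e i`
    (b : OrthonormalBasis (Fin m) ℝ V) (e : Fin m → ℝ)
    (heig : ∀ i, P₀ (b i) = e i • b i)
    -- `P(t)`, the Chern-Ricci operator of `ω(t)`, determined by `(I - 2tP₀)P(t) = P₀`
    (P : ℝ → (V →L[ℝ] V))
    (hP : ∀ t : ℝ, (∀ i, 0 < 1 - 2*t*(e i)) → (1 - (2*t) • P₀) ∘L P t = P₀) :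
    (∀ t : ℝ, (∀ i, 0 < 1 - 2*t*(e i)) →
      P t = Ring.inverse (1 - (2*t) • P₀) ∘L P₀) ∧
    (∀ t : ℝ, (∀ i, 0 < 1 - 2*t*(e i)) →
      LinearMap.trace ℝ V ((P t : V →L[ℝ] V) : V →ₗ[ℝ] V)
        = ∑ i, e i / (1 - 2*t*(e i))) ∧
    (∀ t : ℝ, (∀ i, 0 < 1 - 2*t*(e i)) →
      HasDerivAt (fun s : ℝ => ∑ i, e i / (1 - 2*s*(e i)))
        (∑ i, 2*(e i)^2 / (1 - 2*t*(e i))^2) t ∧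
      0 ≤ ∑ i, 2*(e i)^2 / (1 - 2*t*(e i))^2) ∧
    MonotoneOn (fun s : ℝ => ∑ i, e i / (1 - 2*s*(e i)))
      {t : ℝ | ∀ i, 0 < 1 - 2*t*(e i)} ∧
    (P₀ ≠ 0 → StrictMonoOn (fun s : ℝ => ∑ i, e i / (1 - 2*s*(e i)))
      {t : ℝ | ∀ i, 0 < 1 - 2*t*(e i)}) ∧
    (∀ pPlus : ℝ, 0 < pPlus → (∃ i, e i = pPlus) → (∀ i, e i ≤ pPlus) →
      Filter.Tendsto (fun s : ℝ => ∫ t in (0:ℝ)..s, ∑ i, e i / (1 - 2*t*(e i)))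
        (nhdsWithin (1/(2*pPlus)) (Set.Iio (1/(2*pPlus)))) Filter.atTop ∧
      ∃ C > 0, ∀ t ∈ Set.Ico (0:ℝ) (1/(2*pPlus)),
        (∑ i, e i / (1 - 2*t*(e i))) ≤ C / (1/(2*pPlus) - t)) := by
  classical
  -- bijectivity of `I - 2tP₀` when all `1 - 2t pᵢ > 0`
  have hbij : ∀ t : ℝ, (∀ i, 0 < 1 - 2*t*(e i)) →
      Function.Bijective (1 - (2*t) • P₀ : V →L[ℝ] V) := by
    intro t ht
    set A : V →L[ℝ] V := 1 - (2*t) • P₀ with hA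
    have hinj : Function.Injective A := by
      intro x y hxy
      set z := x - y with hzdef
      have hz : A z = 0 := by rw [map_sub, hxy, sub_self]
      have hx0 : z = 0 := by
        have hrepr : b.repr z = 0 := by
          ext i
          have h1 : inner ℝ (b i) (A z) = (0:ℝ) := by rw [hz]; simp
          have h2 : inner ℝ (b i) (A z) = (1 - 2*t*(e i)) * inner ℝ (b i) z := by
            have h3 : inner ℝ (b i) (P₀ z) = e i * inner ℝ (b i) z := by
              rw [← ContinuousLinearMap.adjoint_inner_left, hsym, heig i,
                real_inner_smul_left]
            simp only [hA, ContinuousLinearMap.sub_apply, ContinuousLinearMap.one_apply,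
              ContinuousLinearMap.smul_apply, inner_sub_right, real_inner_smul_right, h3]
            ring
          have h4 : (1 - 2*t*(e i)) * inner ℝ (b i) z = 0 := by rw [← h2, h1]
          have h5 : inner ℝ (b i) z = (0:ℝ) :=
            (mul_eq_zero.mp h4).resolve_left (ne_of_gt (ht i))
          simpa [b.repr_apply_apply] using h5
        simpa using congrArg b.repr.symm hrepr
      exact sub_eq_zero.mp hx0
    exact ⟨hinj, (LinearMap.injective_iff_surjective (f := (A : V →ₗ[ℝ] V))).mp hinj⟩
  have hunit : ∀ t : ℝ, (∀ i, 0 < 1 - 2*t*(e i)) →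
      IsUnit (1 - (2*t) • P₀ : V →L[ℝ] V) := by
    intro t ht
    let eA := LinearEquiv.ofBijective ((1 - (2*t) • P₀ : V →L[ℝ] V) : V →ₗ[ℝ] V) (hbij t ht)
    let eA' := eA.toContinuousLinearEquiv
    have h1 : (eA'.toUnit : V →L[ℝ] V) = (1 - (2*t) • P₀ : V →L[ℝ] V) := by ext x; rfl
    exact h1 ▸ eA'.toUnit.isUnit
  -- part 1: the inverse formula
  have part1 : ∀ t : ℝ, (∀ i, 0 < 1 - 2*t*(e i)) →
      P t = Ring.inverse (1 - (2*t) • P₀) ∘L P₀ := by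
    intro t ht
    calc P t = Ring.inverse (1 - (2*t) • P₀) ∘L ((1 - (2*t) • P₀) ∘L P t) := by
          rw [← ContinuousLinearMap.comp_assoc,
            ← ContinuousLinearMap.mul_def (Ring.inverse (1 - (2*t) • P₀)) (1 - (2*t) • P₀),
            Ring.inverse_mul_cancel _ (hunit t ht), ContinuousLinearMap.one_def,
            ContinuousLinearMap.id_comp]
      _ = Ring.inverse (1 - (2*t) • P₀) ∘L P₀ := by rw [hP t ht]
  -- eigenvector action of `P t`
  have happly : ∀ t : ℝ, (∀ i, 0 < 1 - 2*t*(e i)) →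
      ∀ i, P t (b i) = (e i / (1 - 2*t*(e i))) • b i := by
    intro t ht i
    apply (hbij t ht).1
    have h1 : (1 - (2*t) • P₀ : V →L[ℝ] V) (P t (b i)) = P₀ (b i) := by
      conv_rhs => rw [← hP t ht]
      rfl
    rw [h1, heig i]
    simp only [ContinuousLinearMap.sub_apply, ContinuousLinearMap.one_apply,
      ContinuousLinearMap.smul_apply, map_smul, heig i, smul_smul]
    rw [smul_sub, smul_smul, ← sub_smul]
    congr 1
    have hne := ne_of_gt (ht i)
    linear_combination (-(e i)) * (mul_inv_cancel₀ hne)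
  -- part 2: the trace formula
  have part2 : ∀ t : ℝ, (∀ i, 0 < 1 - 2*t*(e i)) →
      LinearMap.trace ℝ V ((P t : V →L[ℝ] V) : V →ₗ[ℝ] V)
        = ∑ i, e i / (1 - 2*t*(e i)) := by
    intro t ht
    rw [LinearMap.trace_eq_matrix_trace ℝ b.toBasis, Matrix.trace]
    congr 1
    ext i
    simp [Matrix.diag, LinearMap.toMatrix_apply, OrthonormalBasis.coe_toBasis, happly t ht]
  -- part 3: derivative of the scalar curvature
  have hfd : ∀ t : ℝ, (∀ i, 0 < 1 - 2*t*(e i)) →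
      HasDerivAt (fun s : ℝ => ∑ i, e i / (1 - 2*s*(e i)))
        (∑ i, 2*(e i)^2 / (1 - 2*t*(e i))^2) t := by
    intro t ht
    apply HasDerivAt.fun_sum
    intro i _
    have h1 : HasDerivAt (fun s : ℝ => 1 - 2*s*(e i)) (-(2*(e i))) t := by
      have := ((hasDerivAt_id t).const_mul 2).mul_const (e i)
      simpa using this.const_sub 1
    have h2 := (hasDerivAt_const t (e i)).fun_div h1 (ne_of_gt (ht i))
    convert h2 using 1
    · rfl
    ring
  have hnonneg : ∀ t : ℝ, 0 ≤ ∑ i, 2*(e i)^2 / (1 - 2*t*(e i))^2 := by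
    intro t
    exact Finset.sum_nonneg fun i _ => div_nonneg (by positivity) (sq_nonneg _)
  -- the set of allowed times is open and convex
  set S : Set ℝ := {t : ℝ | ∀ i, 0 < 1 - 2*t*(e i)} with hS
  have hSeq : S = ⋂ i, {t : ℝ | (2*(e i)) • t < (1:ℝ)} := by
    ext t
    simp only [hS, Set.mem_setOf_eq, Set.mem_iInter, smul_eq_mul]
    exact forall_congr' fun i => by constructor <;> intro h <;> nlinarith
  have hSconv : Convex ℝ S := by
    rw [hSeq]
    exact convex_iInter fun i => convex_halfSpace_lt (IsLinearMap.isLinearMap_smul _) 1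
  have hSopen : IsOpen S := by
    rw [hSeq]
    exact isOpen_iInter_of_finite fun i =>
      isOpen_lt (continuous_const_smul _) continuous_const
  have hScont : ContinuousOn (fun s : ℝ => ∑ i, e i / (1 - 2*s*(e i))) S :=
    fun x hx => ((hfd x hx).continuousAt).continuousWithinAt
  have hSint : interior S = S := hSopen.interior_eq
  -- part 4: monotone
  have part4 : MonotoneOn (fun s : ℝ => ∑ i, e i / (1 - 2*s*(e i))) S := by
    apply monotoneOn_of_deriv_nonneg hSconv hScont
    · rw [hSint]
      exact fun x hx => ((hfd x hx).differentiableAt).differentiableWithinAt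
    · rw [hSint]
      intro x hx
      rw [(hfd x hx).deriv]
      exact hnonneg x
  -- part 5: strictly monotone when P₀ ≠ 0
  have part5 : P₀ ≠ 0 → StrictMonoOn (fun s : ℝ => ∑ i, e i / (1 - 2*s*(e i))) S := by
    intro hne
    have hex : ∃ i, e i ≠ 0 := by
      by_contra hc
      push_neg at hc
      apply hne
      apply ContinuousLinearMap.coe_injective
      apply Module.Basis.ext b.toBasis
      intro i
      simp [OrthonormalBasis.coe_toBasis, heig i, hc i]
    obtain ⟨i₀, hi₀⟩ := hex
    apply strictMonoOn_of_deriv_pos hSconv hScont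
    rw [hSint]
    intro x hx
    rw [(hfd x hx).deriv]
    apply Finset.sum_pos' (fun i _ => div_nonneg (by positivity) (sq_nonneg _))
    refine ⟨i₀, Finset.mem_univ _, ?_⟩
    have h1 : 0 < (e i₀)^2 := (sq_nonneg _).lt_of_ne (Ne.symm (pow_ne_zero 2 hi₀))
    have h2 : 0 < (1 - 2*x*(e i₀))^2 := pow_pos (hx i₀) 2
    exact div_pos (by linarith) h2
  refine ⟨part1, part2, fun t ht => ⟨hfd t ht, hnonneg t⟩, part4, part5, ?_⟩
  -- part 6
  intro pPlus hp hex hle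
  obtain ⟨i₀, hi₀⟩ := hex
  set T : ℝ := 1/(2*pPlus) with hT
  have hT0 : 0 < T := by positivity
  have hmem : ∀ t, 0 ≤ t → t < T → ∀ i, 0 < 1 - 2*t*(e i) := by
    intro t ht0 htT i
    have h2 : t * (2*pPlus) < 1 := by
      rw [hT] at htT; exact (lt_div_iff₀ (by positivity)).mp htT
    rcases le_or_gt (e i) 0 with h | h
    · nlinarith
    · nlinarith [mul_le_mul_of_nonneg_left (hle i) (by linarith : (0:ℝ) ≤ 2*t)]
  constructor
  · -- the integral diverges
    set F : ℝ → ℝ := fun s => ∑ i, -(1/2) * Real.log (1 - 2*s*(e i)) with hF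
    have hFderiv : ∀ t, (∀ i, 0 < 1 - 2*t*(e i)) →
        HasDerivAt F (∑ i, e i / (1 - 2*t*(e i))) t := by
      intro t ht
      apply HasDerivAt.fun_sum
      intro i _
      have h1 : HasDerivAt (fun s : ℝ => 1 - 2*s*(e i)) (-(2*(e i))) t := by
        have := ((hasDerivAt_id t).const_mul 2).mul_const (e i)
        simpa using this.const_sub 1
      have h2 := (h1.log (ne_of_gt (ht i))).const_mul (-(1/2))
      convert h2 using 1
      · rfl
      ring
    have hint : ∀ s, 0 ≤ s → s < T →
        (∫ t in (0:ℝ)..s, ∑ i, e i / (1 - 2*t*(e i))) = F s := by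
      intro s hs0 hsT
      have huIcc : Set.uIcc (0:ℝ) s = Set.Icc 0 s := Set.uIcc_of_le hs0
      have hmem' : ∀ t ∈ Set.uIcc (0:ℝ) s, ∀ i, 0 < 1 - 2*t*(e i) := by
        intro t htm
        rw [huIcc] at htm
        exact hmem t htm.1 (lt_of_le_of_lt htm.2 hsT)
      have key := intervalIntegral.integral_eq_sub_of_hasDerivAt
        (f := F) (f' := fun t => ∑ i, e i / (1 - 2*t*(e i)))
        (fun t htm => hFderiv t (hmem' t htm))
        (ContinuousOn.intervalIntegrable
          (fun t htm => ((hfd t (hmem' t htm)).continuousAt).continuousWithinAt))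
      rw [key]
      have h0 : F 0 = 0 := by simp [hF]
      rw [h0, sub_zero]
    set M : ℝ := ∑ i ∈ Finset.univ.erase i₀, min 0 (-(1/2) * Real.log (1 - 2*T*(e i)))
      with hM
    have hlow : ∀ s, 0 ≤ s → s < T →
        -(1/2) * Real.log (1 - 2*s*(e i₀)) + M ≤ F s := by
      intro s hs0 hsT
      have hbound : ∀ i, min 0 (-(1/2) * Real.log (1 - 2*T*(e i)))
          ≤ -(1/2) * Real.log (1 - 2*s*(e i)) := by
        intro i
        rcases le_or_gt 0 (e i) with h | h
        · refine le_trans (min_le_left _ _) ?_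
          have h1 : 1 - 2*s*(e i) ≤ 1 := by nlinarith
          have h2 := Real.log_nonpos (le_of_lt (hmem s hs0 hsT i)) h1
          linarith
        · refine le_trans (min_le_right _ _) ?_
          have h1 : 1 - 2*s*(e i) ≤ 1 - 2*T*(e i) := by nlinarith
          have h2 := Real.log_le_log (hmem s hs0 hsT i) h1
          linarith
      calc -(1/2) * Real.log (1 - 2*s*(e i₀)) + M
          ≤ -(1/2) * Real.log (1 - 2*s*(e i₀))
            + ∑ i ∈ Finset.univ.erase i₀, -(1/2) * Real.log (1 - 2*s*(e i)) :=
            add_le_add_right (Finset.sum_le_sum fun i _ => hbound i) _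
        _ = F s := Finset.add_sum_erase Finset.univ
            (fun i => -(1/2) * Real.log (1 - 2*s*(e i))) (Finset.mem_univ i₀)
    have hlogtop : Filter.Tendsto (fun s : ℝ => -(1/2) * Real.log (1 - 2*s*(e i₀)) + M)
        (nhdsWithin T (Set.Iio T)) Filter.atTop := by
      apply Filter.tendsto_atTop_add_const_right
      have h1 : Filter.Tendsto (fun s : ℝ => 1 - 2*s*(e i₀)) (nhdsWithin T (Set.Iio T))
          (nhdsWithin 0 (Set.Ioi 0)) := by
        apply tendsto_nhdsWithin_of_tendsto_nhds_of_eventually_within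
        · have hc : Continuous (fun s : ℝ => 1 - 2*s*(e i₀)) := by fun_prop
          have hval : (1 : ℝ) - 2*T*(e i₀) = 0 := by rw [hi₀, hT]; field_simp; norm_num
          have h0 : Filter.Tendsto (fun s : ℝ => 1 - 2*s*(e i₀)) (nhds T) (nhds 0) := by
            simpa [hval] using hc.tendsto T
          exact h0.mono_left nhdsWithin_le_nhds
        · filter_upwards [self_mem_nhdsWithin] with s hs
          rw [Set.mem_Iio] at hs
          rw [Set.mem_Ioi, hi₀]
          have h2 : s * (2*pPlus) < 1 := by
            rw [hT] at hs; exact (lt_div_iff₀ (by positivity)).mp hs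
          nlinarith
      have h2 := Real.tendsto_log_nhdsGT_zero.comp h1
      have h3 : Filter.Tendsto (fun s : ℝ => Real.log (1 - 2*s*(e i₀)))
          (nhdsWithin T (Set.Iio T)) Filter.atBot := h2
      have h4 := Filter.tendsto_neg_atBot_atTop.comp h3
      have h5 : Filter.Tendsto (fun s : ℝ => -Real.log (1 - 2*s*(e i₀)))
          (nhdsWithin T (Set.Iio T)) Filter.atTop := h4
      have h6 := h5.const_mul_atTop (by norm_num : (0:ℝ) < 1/2)
      convert h6 using 2
      ring
    apply Filter.tendsto_atTop_mono' _ _ hlogtop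
    filter_upwards [Ioo_mem_nhdsLT (by linarith : T/2 < T)] with s hs2
    have hs0 : 0 ≤ s := by linarith [hs2.1, half_pos hT0]
    rw [hint s hs0 hs2.2]
    exact hlow s hs0 hs2.2
  · -- the bound `C/(T-t)`
    refine ⟨(m+1)/2, by positivity, ?_⟩
    rintro t ⟨ht0, htT⟩
    have hTt : 0 < T - t := by linarith
    have hden : ∀ i, 0 < e i → 2*pPlus*(T - t) ≤ 1 - 2*t*(e i) := by
      intro i hei
      have hTp : 2*pPlus*T = 1 := by rw [hT]; field_simp
      nlinarith [mul_le_mul_of_nonneg_left (hle i) (by linarith : (0:ℝ) ≤ 2*t)]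
    have hterm : ∀ i, e i / (1 - 2*t*(e i)) ≤ 1/(2*(T-t)) := by
      intro i
      rcases le_or_gt (e i) 0 with h | h
      · exact le_trans (div_nonpos_of_nonpos_of_nonneg h (le_of_lt (hmem t ht0 htT i)))
          (by positivity)
      · rw [div_le_div_iff₀ (hmem t ht0 htT i) (by positivity)]
        nlinarith [hden i h, mul_le_mul_of_nonneg_right (hle i)
          (by linarith : (0:ℝ) ≤ 2*(T-t))]
    calc (∑ i, e i / (1 - 2*t*(e i))) ≤ ∑ _i : Fin m, 1/(2*(T-t)) :=
          Finset.sum_le_sum fun i _ => hterm i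
      _ = m * (1/(2*(T-t))) := by simp [mul_comm]
      _ ≤ ((m:ℝ)+1)/2 / (T - t) := by
          rw [mul_one_div, div_div, div_le_div_iff₀ (by linarith) (by linarith)]
          nlinarith [hTt, (Nat.cast_nonneg m : (0:ℝ) ≤ m)]
end

section
/- Let P be a symmetric operator on a Lie algebra g (with inner product) such that P = cI + D for some c ≠ 0 and derivation D of g, and suppose the eigenvalues of P are contained in {0, c}. Then k := Ker P is an abelian ideal of g and its orthogonal complement k^⊥ (the c-eigenspace of P) is a Lie subalgebra, so g = k^⊥ ⋉ k. -/
open scoped RealInnerProductSpace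

/-- Proposition 7.3 of the paper (structure of Chern-Ricci solitons): if `P` is a
symmetric operator on a metric Lie algebra with `P = cI + D` for a derivation `D` and
`c ≠ 0`, and the eigenvalues of `P` are contained in `{0, c}`, then `k = Ker P` is an
abelian ideal, its orthogonal complement `k^⊥` (the `c`-eigenspace of `P`) is a Lie
subalgebra, and `g = k^⊥ ⋉ k`. -/
theorem chern_ricci_soliton_structure {V : Type*} [NormedAddCommGroup V]
    [InnerProductSpace ℝ V] [FiniteDimensional ℝ V]
    -- the Lie bracket
    (L : V →ₗ[ℝ] V →ₗ[ℝ] V)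
    (halt : ∀ X : V, L X X = 0)
    (hjac : ∀ X Y Z : V, L X (L Y Z) + L Y (L Z X) + L Z (L X Y) = 0)
    (P : V →ₗ[ℝ] V) (c : ℝ) (hc : c ≠ 0)
    (hsym : ∀ X Y : V, ⟪P X, Y⟫ = ⟪X, P Y⟫)
    -- `D := P - cI` is a derivation
    (hder : ∀ X Y : V, P (L X Y) - c • L X Y
      = L (P X - c • X) Y + L X (P Y - c • Y))
    -- the eigenvalues of `P` are contained in `{0, c}`
    (hspec : ∀ r : ℝ, Module.End.HasEigenvalue P r → r = 0 ∨ r = c) :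
    (∀ X ∈ LinearMap.ker P, ∀ Y ∈ LinearMap.ker P, L X Y = 0) ∧
    (∀ X : V, ∀ Y ∈ LinearMap.ker P, L X Y ∈ LinearMap.ker P) ∧
    (∀ X ∈ (LinearMap.ker P)ᗮ, ∀ Y ∈ (LinearMap.ker P)ᗮ, L X Y ∈ (LinearMap.ker P)ᗮ) ∧
    (LinearMap.ker P)ᗮ = Module.End.eigenspace P c ∧
    (LinearMap.ker P) ⊓ (LinearMap.ker P)ᗮ = ⊥ ∧
    (LinearMap.ker P) ⊔ (LinearMap.ker P)ᗮ = ⊤ := by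
  have hPsym : P.IsSymmetric := fun x y => hsym x y
  -- eigenspaces of unlisted eigenvalues are trivial
  have heig : ∀ r : ℝ, r ≠ 0 → r ≠ c → Module.End.eigenspace P r = ⊥ := by
    intro r h0 h1
    by_contra h
    rcases hspec r (Module.End.hasEigenvalue_iff.mpr h) with h' | h' <;> [exact h0 h'; exact h1 h']
  -- abelian: for X, Y ∈ ker P, L X Y ∈ eigenspace P (-c) = ⊥
  have habel : ∀ X ∈ LinearMap.ker P, ∀ Y ∈ LinearMap.ker P, L X Y = 0 := by
    intro X hX Y hY
    rw [LinearMap.mem_ker] at hX hY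
    have h := hder X Y
    rw [hX, hY, zero_sub, zero_sub, map_neg, LinearMap.neg_apply, map_neg, map_smul,
      LinearMap.smul_apply, map_smul] at h
    have hm : L X Y ∈ Module.End.eigenspace P (-c) := by
      rw [Module.End.mem_eigenspace_iff]
      have : P (L X Y) = c • L X Y + (-(c • L X Y) + -(c • L X Y)) := by
        rw [← h]; abel
      rw [this]; module
    rw [heig (-c) (neg_ne_zero.mpr hc) (fun h' => hc (by linarith [h'])), Submodule.mem_bot] at hm
    exact hm
  -- ideal: for Y ∈ ker P, X ∈ eigenspace c, L X Y ∈ ker P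
  have hidealc : ∀ X ∈ Module.End.eigenspace P c, ∀ Y ∈ LinearMap.ker P,
      L X Y ∈ LinearMap.ker P := by
    intro X hX Y hY
    rw [Module.End.mem_eigenspace_iff] at hX
    rw [LinearMap.mem_ker] at hY ⊢
    have h := hder X Y
    rw [hX, hY, sub_self, zero_sub, map_zero, LinearMap.zero_apply, map_neg, map_smul,
      zero_add] at h
    have : P (L X Y) = c • L X Y + -(c • L X Y) := by rw [← h]; abel
    rw [this]; abel
  -- subalgebra: for X, Y ∈ eigenspace c, L X Y ∈ eigenspace c
  have hsub : ∀ X ∈ Module.End.eigenspace P c, ∀ Y ∈ Module.End.eigenspace P c,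
      L X Y ∈ Module.End.eigenspace P c := by
    intro X hX Y hY
    rw [Module.End.mem_eigenspace_iff] at hX hY ⊢
    have h := hder X Y
    rw [hX, hY, sub_self, sub_self, map_zero, map_zero, LinearMap.zero_apply, add_zero] at h
    have : P (L X Y) = c • L X Y + (P (L X Y) - c • L X Y) := by abel
    rw [this, h, add_zero]
  -- eigenspace c ⊆ (ker P)ᗮ
  have hle : Module.End.eigenspace P c ≤ (LinearMap.ker P)ᗮ := by
    intro x hx
    rw [Module.End.mem_eigenspace_iff] at hx
    intro y hy
    rw [LinearMap.mem_ker] at hy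
    have : c * ⟪y, x⟫ = 0 := by
      calc c * ⟪y, x⟫ = ⟪y, c • x⟫ := by rw [real_inner_smul_right]
        _ = ⟪y, P x⟫ := by rw [hx]
        _ = ⟪P y, x⟫ := (hsym y x).symm
        _ = 0 := by rw [hy, inner_zero_left]
    exact (mul_eq_zero.mp this).resolve_left hc
  -- the span of eigenspaces is everything
  have htop : LinearMap.ker P ⊔ Module.End.eigenspace P c = ⊤ := by
    have h1 : (⨆ μ, Module.End.eigenspace P μ) = ⊤ :=
      Submodule.orthogonal_eq_bot_iff.mp hPsym.orthogonalComplement_iSup_eigenspaces_eq_bot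
    rw [← top_le_iff, ← h1]
    refine iSup_le fun μ => ?_
    rcases eq_or_ne μ 0 with rfl | h0
    · rw [Module.End.eigenspace_zero]; exact le_sup_left
    rcases eq_or_ne μ c with rfl | h1
    · exact le_sup_right
    · rw [heig μ h0 h1]; exact bot_le
  -- (ker P)ᗮ = eigenspace c
  have horth : (LinearMap.ker P)ᗮ = Module.End.eigenspace P c := by
    refine le_antisymm ?_ hle
    intro x hx
    have hxmem : x ∈ LinearMap.ker P ⊔ Module.End.eigenspace P c := htop ▸ Submodule.mem_top
    rcases Submodule.mem_sup.mp hxmem with ⟨a, ha, b, hb, rfl⟩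
    have hb' : b ∈ (LinearMap.ker P)ᗮ := hle hb
    have ha' : a ∈ (LinearMap.ker P)ᗮ := by
      have : a = a + b - b := by abel
      rw [this]; exact Submodule.sub_mem _ hx hb'
    have : a = 0 := by
      have := Submodule.inner_right_of_mem_orthogonal ha ha'
      exact inner_self_eq_zero.mp this
    rw [this, zero_add]; exact hb
  refine ⟨habel, ?_, ?_, horth, ?_, ?_⟩
  · intro X Y hY
    have hXmem : X ∈ LinearMap.ker P ⊔ Module.End.eigenspace P c := htop ▸ Submodule.mem_top
    rcases Submodule.mem_sup.mp hXmem with ⟨a, ha, b, hb, rfl⟩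
    have : L (a + b) Y = L a Y + L b Y := by simp [map_add]
    rw [this]
    exact Submodule.add_mem _ (by rw [habel a ha Y hY]; exact Submodule.zero_mem _)
      (hidealc b hb Y hY)
  · intro X hX Y hY
    rw [horth] at hX hY ⊢
    exact hsub X hX Y hY
  · exact (Submodule.isCompl_orthogonal_of_hasOrthogonalProjection (K := LinearMap.ker P)).inf_eq_bot
  · exact (Submodule.isCompl_orthogonal_of_hasOrthogonalProjection (K := LinearMap.ker P)).sup_eq_top
end

section
/- Consider the planar ODE system a' = (-9a² + (1/4)b² - 2ab)a, b' = (-3a² - (5/4)b² - 2ab)b with initial condition a₀, b₀ > 0. Then the solution exists for all t ≥ 0, stays in the open first quadrant, converges to (0,0) as t → ∞, and the normalized solution (a,b)/√(a²+b²) converges to (1,2)/√5 as t → ∞. -/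
open Real Filter Set

set_option linter.unusedSectionVars false

namespace SCFEx

/-! Auxiliary pure-algebra lemmas -/

lemma factor_eq (s : ℝ) (hs : s ≠ 0) (hs2 : s + 1/2 ≠ 0) :
    -12 + (1 / (6 * s) - (2/3) / (s + 1/2)) * (-6 * (s ^ 2 - 1/4) / s)
      = -9 + 1/(4*s^2) - 2/s := by
  have h6 : (3:ℝ) + s * 6 ≠ 0 := fun h => hs2 (by linarith)
  have h7 : s * 2 + 1 ≠ 0 := fun h => hs2 (by linarith)
  field_simp [h6, h7]
  ring

lemma id1 (A s sd : ℝ) (hs : s ≠ 0) (hs2 : s + 1/2 ≠ 0)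
    (hsd : sd = -6 * (s ^ 2 - 1/4) / s) :
    (A * (-12 + (1 / (6 * s) - (2/3) / (s + 1/2)) * sd)) * A ^ 2
      = (-9*A^2 + (1/4)*(A/s)^2 - 2*A*(A/s)) * A := by
  subst hsd
  rw [factor_eq s hs hs2]
  field_simp

lemma id2 (A s sd : ℝ) (hs : s ≠ 0) (hs2 : s + 1/2 ≠ 0)
    (hsd : sd = -6 * (s ^ 2 - 1/4) / s) :
    ((A * (-12 + (1 / (6 * s) - (2/3) / (s + 1/2)) * sd)) * s - A * sd) / s ^ 2 * A ^ 2
      = (-3*A^2 - (5/4)*(A/s)^2 - 2*A*(A/s)) * (A/s) := by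
  subst hsd
  rw [factor_eq s hs hs2]
  field_simp
  ring

/-! The construction -/

variable (a₀ b₀ : ℝ)

noncomputable def Cc : ℝ := (a₀ / b₀) ^ 2 - 1 / 4

noncomputable def τm : ℝ := Real.log (max (-4 * Cc a₀ b₀) (1 / 2)) / 12

noncomputable def w (τ : ℝ) : ℝ := 1 / 4 + Cc a₀ b₀ * Real.exp (-12 * τ)

noncomputable def s (τ : ℝ) : ℝ := Real.sqrt (w a₀ b₀ τ)

noncomputable def A (τ : ℝ) : ℝ :=
  a₀ * Real.exp (-12 * τ) * (s a₀ b₀ τ / s a₀ b₀ 0) ^ (1/6 : ℝ)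
    * ((s a₀ b₀ 0 + 1/2) / (s a₀ b₀ τ + 1/2)) ^ (2/3 : ℝ)

noncomputable def B (τ : ℝ) : ℝ := A a₀ b₀ τ / s a₀ b₀ τ

noncomputable def sd (τ : ℝ) : ℝ := -6 * ((s a₀ b₀ τ) ^ 2 - 1 / 4) / s a₀ b₀ τ

noncomputable def Ad (τ : ℝ) : ℝ :=
  A a₀ b₀ τ * (-12 + (1 / (6 * s a₀ b₀ τ) - (2/3) / (s a₀ b₀ τ + 1/2)) * sd a₀ b₀ τ)

noncomputable def Bd (τ : ℝ) : ℝ :=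
  (Ad a₀ b₀ τ * s a₀ b₀ τ - A a₀ b₀ τ * sd a₀ b₀ τ) / (s a₀ b₀ τ) ^ 2

noncomputable def T (τ : ℝ) : ℝ := ∫ σ in (0:ℝ)..τ, ((A a₀ b₀ σ)⁻¹) ^ 2

variable (ha : 0 < a₀) (hb : 0 < b₀)
include ha hb

lemma hCc : -(1/4) < Cc a₀ b₀ := by
  have : 0 < (a₀ / b₀) ^ 2 := pow_pos (div_pos ha hb) 2
  unfold Cc; linarith

lemma τm_neg : τm a₀ b₀ < 0 := by
  have h1 : -4 * Cc a₀ b₀ < 1 := by have := hCc a₀ b₀ ha hb; linarith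
  have h2 : max (-4 * Cc a₀ b₀) (1/2) < 1 := max_lt h1 (by norm_num)
  have h3 : Real.log (max (-4 * Cc a₀ b₀) (1/2)) < 0 :=
    Real.log_neg (lt_max_of_lt_right (by norm_num)) h2
  unfold τm; linarith

lemma w_pos {τ : ℝ} (hτ : τm a₀ b₀ < τ) : 0 < w a₀ b₀ τ := by
  rcases le_or_gt 0 (Cc a₀ b₀) with hC | hC
  · have : 0 ≤ Cc a₀ b₀ * Real.exp (-12 * τ) := mul_nonneg hC (Real.exp_pos _).le
    unfold w; linarith
  · have hM : (0:ℝ) < max (-4 * Cc a₀ b₀) (1/2) := lt_max_of_lt_right (by norm_num)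
    have he : Real.exp (-12 * τ) < (max (-4 * Cc a₀ b₀) (1/2))⁻¹ := by
      rw [← Real.exp_log (inv_pos.2 hM), Real.log_inv, Real.exp_lt_exp]
      have : Real.log (max (-4 * Cc a₀ b₀) (1/2)) = 12 * τm a₀ b₀ := by
        unfold τm; ring
      rw [this]; linarith
    have hle : (max (-4 * Cc a₀ b₀) (1/2))⁻¹ ≤ (-4 * Cc a₀ b₀)⁻¹ :=
      inv_anti₀ (by linarith) (le_max_left _ _)
    have he2 : Real.exp (-12 * τ) < (-4 * Cc a₀ b₀)⁻¹ := lt_of_lt_of_le he hle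
    have hmul : Cc a₀ b₀ * Real.exp (-12 * τ) > Cc a₀ b₀ * (-4 * Cc a₀ b₀)⁻¹ :=
      (mul_lt_mul_left_of_neg hC).2 he2
    have : Cc a₀ b₀ * (-4 * Cc a₀ b₀)⁻¹ = -(1/4) := by
      have h4 : (-4 * Cc a₀ b₀) ≠ 0 := by nlinarith
      rw [mul_inv_eq_iff_eq_mul₀ h4]; ring
    unfold w; rw [this] at hmul; linarith

lemma s_pos {τ : ℝ} (hτ : τm a₀ b₀ < τ) : 0 < s a₀ b₀ τ :=
  Real.sqrt_pos.2 (w_pos a₀ b₀ ha hb hτ)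

lemma s_sq {τ : ℝ} (hτ : τm a₀ b₀ < τ) : (s a₀ b₀ τ) ^ 2 = w a₀ b₀ τ :=
  Real.sq_sqrt (w_pos a₀ b₀ ha hb hτ).le

lemma s_zero : s a₀ b₀ 0 = a₀ / b₀ := by
  have : w a₀ b₀ 0 = (a₀ / b₀) ^ 2 := by
    unfold w Cc; simp [Real.exp_zero]
  rw [s, this, Real.sqrt_sq (div_pos ha hb).le]

lemma A_pos {τ : ℝ} (hτ : τm a₀ b₀ < τ) : 0 < A a₀ b₀ τ := by
  have h0 : (0:ℝ) > τm a₀ b₀ := τm_neg a₀ b₀ ha hb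
  have hs := s_pos a₀ b₀ ha hb hτ
  have hs0 := s_pos a₀ b₀ ha hb h0
  exact mul_pos (mul_pos (mul_pos ha (Real.exp_pos _))
    (Real.rpow_pos_of_pos (div_pos hs hs0) _))
    (Real.rpow_pos_of_pos (div_pos (by linarith) (by linarith)) _)

lemma B_pos {τ : ℝ} (hτ : τm a₀ b₀ < τ) : 0 < B a₀ b₀ τ :=
  div_pos (A_pos a₀ b₀ ha hb hτ) (s_pos a₀ b₀ ha hb hτ)

lemma A_zero : A a₀ b₀ 0 = a₀ := by
  have h0 : (0:ℝ) > τm a₀ b₀ := τm_neg a₀ b₀ ha hb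
  have hs0 := s_pos a₀ b₀ ha hb h0
  unfold A
  rw [div_self hs0.ne', div_self (by linarith : s a₀ b₀ 0 + 1/2 ≠ 0)]
  simp

lemma B_zero : B a₀ b₀ 0 = b₀ := by
  rw [B, A_zero a₀ b₀ ha hb, s_zero a₀ b₀ ha hb]
  field_simp

/-! Derivatives in the τ variable -/

omit ha hb in
lemma hasDerivAt_w (τ : ℝ) :
    HasDerivAt (w a₀ b₀) (-12 * (w a₀ b₀ τ - 1/4)) τ := by
  have h : HasDerivAt (fun τ : ℝ => 1/4 + Cc a₀ b₀ * Real.exp (-12 * τ))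
      (Cc a₀ b₀ * (Real.exp (-12 * τ) * -12)) τ := by
    have he : HasDerivAt (fun τ : ℝ => Real.exp (-12 * τ)) (Real.exp (-12 * τ) * -12) τ := by
      have : HasDerivAt (fun τ : ℝ => -12 * τ) (-12) τ := by
        simpa using (hasDerivAt_id τ).const_mul (-12:ℝ)
      exact (Real.hasDerivAt_exp _).comp τ this
    simpa using (he.const_mul (Cc a₀ b₀)).const_add (1/4 : ℝ)
  refine h.congr_deriv (Eq.symm ?_)
  unfold w; ring

lemma hasDerivAt_s {τ : ℝ} (hτ : τm a₀ b₀ < τ) :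
    HasDerivAt (s a₀ b₀) (sd a₀ b₀ τ) τ := by
  have hw := w_pos a₀ b₀ ha hb hτ
  have h := (Real.hasDerivAt_sqrt hw.ne').comp τ (hasDerivAt_w a₀ b₀ τ)
  have hsq : (s a₀ b₀ τ)^2 = w a₀ b₀ τ := Real.sq_sqrt hw.le
  have hs : 0 < s a₀ b₀ τ := Real.sqrt_pos.2 hw
  refine h.congr_deriv (Eq.symm ?_)
  unfold sd
  rw [← hsq]
  field_simp [s]
  rw [Real.sqrt_sq hs.le]
  ring

lemma hasDerivAt_A {τ : ℝ} (hτ : τm a₀ b₀ < τ) :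
    HasDerivAt (A a₀ b₀) (Ad a₀ b₀ τ) τ := by
  have h0 : τm a₀ b₀ < 0 := τm_neg a₀ b₀ ha hb
  have hs : 0 < s a₀ b₀ τ := s_pos a₀ b₀ ha hb hτ
  have hs0 : 0 < s a₀ b₀ 0 := s_pos a₀ b₀ ha hb h0
  have hds := hasDerivAt_s a₀ b₀ ha hb hτ
  have h1 : HasDerivAt (fun τ : ℝ => a₀ * Real.exp (-12 * τ))
      (a₀ * Real.exp (-12 * τ) * (-12)) τ := by
    have : HasDerivAt (fun τ : ℝ => -12 * τ) (-12) τ := by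
      simpa using (hasDerivAt_id τ).const_mul (-12:ℝ)
    have he := (Real.hasDerivAt_exp _).comp τ this
    have := he.const_mul a₀
    refine this.congr_deriv (Eq.symm ?_); ring
  have h2 : HasDerivAt (fun τ : ℝ => (s a₀ b₀ τ / s a₀ b₀ 0) ^ (1/6 : ℝ))
      ((s a₀ b₀ τ / s a₀ b₀ 0) ^ (1/6 : ℝ) * (sd a₀ b₀ τ / (6 * s a₀ b₀ τ))) τ := by
    have hu : 0 < s a₀ b₀ τ / s a₀ b₀ 0 := div_pos hs hs0
    have hin : HasDerivAt (fun τ : ℝ => s a₀ b₀ τ / s a₀ b₀ 0) (sd a₀ b₀ τ / s a₀ b₀ 0) τ :=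
      hds.div_const _
    have hout := (Real.hasDerivAt_rpow_const (x := s a₀ b₀ τ / s a₀ b₀ 0)
      (p := (1/6 : ℝ)) (Or.inl hu.ne')).comp τ hin
    refine hout.congr_deriv (Eq.symm ?_)
    rw [show (1/6 : ℝ) - 1 = -1 + 1/6 by norm_num, Real.rpow_add hu,
      Real.rpow_neg_one]
    field_simp
  have h3 : HasDerivAt (fun τ : ℝ => ((s a₀ b₀ 0 + 1/2) / (s a₀ b₀ τ + 1/2)) ^ (2/3 : ℝ))
      (((s a₀ b₀ 0 + 1/2) / (s a₀ b₀ τ + 1/2)) ^ (2/3 : ℝ)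
        * (-(2/3) * sd a₀ b₀ τ / (s a₀ b₀ τ + 1/2))) τ := by
    have hden : 0 < s a₀ b₀ τ + 1/2 := by linarith
    have hv : 0 < (s a₀ b₀ 0 + 1/2) / (s a₀ b₀ τ + 1/2) := div_pos (by linarith) hden
    have hin : HasDerivAt (fun τ : ℝ => (s a₀ b₀ 0 + 1/2) / (s a₀ b₀ τ + 1/2))
        (-((s a₀ b₀ 0 + 1/2) * sd a₀ b₀ τ) / (s a₀ b₀ τ + 1/2) ^ 2) τ := by
      have hden' : HasDerivAt (fun τ : ℝ => s a₀ b₀ τ + 1/2) (sd a₀ b₀ τ) τ :=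
        hds.add_const _
      have := (hasDerivAt_const τ (s a₀ b₀ 0 + 1/2)).div hden' hden.ne'
      refine this.congr_deriv (Eq.symm ?_); ring
    have hout := (Real.hasDerivAt_rpow_const (x := (s a₀ b₀ 0 + 1/2) / (s a₀ b₀ τ + 1/2))
      (p := (2/3 : ℝ)) (Or.inl hv.ne')).comp τ hin
    refine hout.congr_deriv (Eq.symm ?_)
    rw [show (2/3 : ℝ) - 1 = -1 + 2/3 by norm_num, Real.rpow_add hv,
      Real.rpow_neg_one]
    field_simp
  have hA := (h1.mul h2).mul h3
  refine hA.congr_deriv (Eq.symm ?_)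
  unfold Ad A
  simp only [Pi.mul_apply]
  field_simp
  ring

lemma hasDerivAt_B {τ : ℝ} (hτ : τm a₀ b₀ < τ) :
    HasDerivAt (B a₀ b₀) (Bd a₀ b₀ τ) τ := by
  exact (hasDerivAt_A a₀ b₀ ha hb hτ).div (hasDerivAt_s a₀ b₀ ha hb hτ)
    (s_pos a₀ b₀ ha hb hτ).ne'

/-! The time reparametrization T and its inverse g -/

lemma contA : ContinuousOn (A a₀ b₀) (Ioi (τm a₀ b₀)) := by
  intro τ hτ
  exact ((hasDerivAt_A a₀ b₀ ha hb hτ).continuousAt).continuousWithinAt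

lemma contF : ContinuousOn (fun σ => ((A a₀ b₀ σ)⁻¹) ^ 2) (Ioi (τm a₀ b₀)) :=
  ((contA a₀ b₀ ha hb).inv₀ (fun τ hτ => (A_pos a₀ b₀ ha hb hτ).ne')).pow 2

lemma intF {x y : ℝ} (hx : τm a₀ b₀ < x) (hy : τm a₀ b₀ < y) :
    IntervalIntegrable (fun σ => ((A a₀ b₀ σ)⁻¹) ^ 2) MeasureTheory.volume x y := by
  apply ContinuousOn.intervalIntegrable
  apply (contF a₀ b₀ ha hb).mono
  exact (Set.ordConnected_Ioi).uIcc_subset hx hy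

lemma hasDerivAt_T {τ : ℝ} (hτ : τm a₀ b₀ < τ) :
    HasDerivAt (T a₀ b₀) (((A a₀ b₀ τ)⁻¹) ^ 2) τ := by
  have h0 : τm a₀ b₀ < 0 := τm_neg a₀ b₀ ha hb
  apply intervalIntegral.integral_hasDerivAt_right (intF a₀ b₀ ha hb h0 hτ)
  · exact ⟨Ioi (τm a₀ b₀), Ioi_mem_nhds hτ,
      ((contF a₀ b₀ ha hb).mono (by simp)).aestronglyMeasurable measurableSet_Ioi⟩
  · exact (contF a₀ b₀ ha hb).continuousAt (Ioi_mem_nhds hτ)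

lemma T_mono : StrictMonoOn (T a₀ b₀) (Ioi (τm a₀ b₀)) := by
  apply strictMonoOn_of_deriv_pos (convex_Ioi _)
  · intro τ hτ
    exact ((hasDerivAt_T a₀ b₀ ha hb hτ).continuousAt).continuousWithinAt
  · intro τ hτ
    rw [interior_Ioi] at hτ
    rw [(hasDerivAt_T a₀ b₀ ha hb hτ).deriv]
    have := A_pos a₀ b₀ ha hb hτ
    positivity

omit ha hb in
lemma T_zero : T a₀ b₀ 0 = 0 := intervalIntegral.integral_same

/-! Bounds on `s` and `A` for τ ≥ 0 -/

lemma s_bounds {τ : ℝ} (hτ : 0 ≤ τ) :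
    min (1/2) (s a₀ b₀ 0) ≤ s a₀ b₀ τ ∧ s a₀ b₀ τ ≤ max (1/2) (s a₀ b₀ 0) := by
  have he1 : Real.exp (-12 * τ) ≤ 1 := Real.exp_le_one_iff.2 (by linarith)
  have he0 : 0 < Real.exp (-12 * τ) := Real.exp_pos _
  have hw : min (1/4) (w a₀ b₀ 0) ≤ w a₀ b₀ τ ∧ w a₀ b₀ τ ≤ max (1/4) (w a₀ b₀ 0) := by
    have hw0 : w a₀ b₀ 0 = 1/4 + Cc a₀ b₀ := by unfold w; simp
    rcases le_or_gt 0 (Cc a₀ b₀) with hC | hC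
    · constructor
      · refine le_trans (min_le_left _ _) ?_
        have : 0 ≤ Cc a₀ b₀ * Real.exp (-12 * τ) := mul_nonneg hC he0.le
        unfold w; linarith
      · refine le_trans ?_ (le_max_right _ _)
        rw [hw0]
        have : Cc a₀ b₀ * Real.exp (-12 * τ) ≤ Cc a₀ b₀ * 1 := by
          exact mul_le_mul_of_nonneg_left he1 hC
        unfold w; linarith
    · constructor
      · refine le_trans (min_le_right _ _) ?_
        rw [hw0]
        have : Cc a₀ b₀ * 1 ≤ Cc a₀ b₀ * Real.exp (-12 * τ) := by
          apply mul_le_mul_of_nonpos_left he1 hC.le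
        unfold w; linarith
      · refine le_trans ?_ (le_max_left _ _)
        have : Cc a₀ b₀ * Real.exp (-12 * τ) ≤ 0 := mul_nonpos_of_nonpos_of_nonneg hC.le he0.le
        unfold w; linarith
  have hmono : Monotone Real.sqrt := fun x y h => Real.sqrt_le_sqrt h
  have hhalf : Real.sqrt (1/4) = 1/2 := by
    rw [show (1/4:ℝ) = (1/2)^2 by norm_num, Real.sqrt_sq (by norm_num : (0:ℝ) ≤ 1/2)]
  constructor
  · have := hmono hw.1
    rwa [hmono.map_min, hhalf] at this
  · have := hmono hw.2
    rwa [hmono.map_max, hhalf] at this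

noncomputable def Kc : ℝ :=
  (max (1/2) (s a₀ b₀ 0) / s a₀ b₀ 0) ^ (1/6 : ℝ)
    * ((s a₀ b₀ 0 + 1/2) / (min (1/2) (s a₀ b₀ 0) + 1/2)) ^ (2/3 : ℝ)

lemma Kc_pos : 0 < Kc a₀ b₀ := by
  have hs0 := s_pos a₀ b₀ ha hb (τm_neg a₀ b₀ ha hb)
  have hm : 0 < min (1/2) (s a₀ b₀ 0) := lt_min (by norm_num) hs0
  have hM : 0 < max (1/2) (s a₀ b₀ 0) := lt_of_lt_of_le hm (min_le_max)
  exact mul_pos (Real.rpow_pos_of_pos (div_pos hM hs0) _)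
    (Real.rpow_pos_of_pos (div_pos (by linarith) (by linarith)) _)

lemma A_le' {τ : ℝ} (hτ : 0 ≤ τ) :
    A a₀ b₀ τ ≤ a₀ * Kc a₀ b₀ * Real.exp (-12 * τ) := by
  have h0 : τm a₀ b₀ < 0 := τm_neg a₀ b₀ ha hb
  have hτ' : τm a₀ b₀ < τ := lt_of_lt_of_le h0 hτ
  have hs := s_pos a₀ b₀ ha hb hτ'
  have hs0 := s_pos a₀ b₀ ha hb h0
  have hsb := s_bounds a₀ b₀ ha hb hτ
  have hm : 0 < min (1/2) (s a₀ b₀ 0) := lt_min (by norm_num) hs0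
  have he1 : Real.exp (-12 * τ) ≤ 1 := Real.exp_le_one_iff.2 (by linarith)
  have h2 : (s a₀ b₀ τ / s a₀ b₀ 0) ^ (1/6 : ℝ)
      ≤ (max (1/2) (s a₀ b₀ 0) / s a₀ b₀ 0) ^ (1/6 : ℝ) := by
    apply Real.rpow_le_rpow (by positivity) ?_ (by norm_num)
    gcongr
    exact hsb.2
  have h3 : ((s a₀ b₀ 0 + 1/2) / (s a₀ b₀ τ + 1/2)) ^ (2/3 : ℝ)
      ≤ ((s a₀ b₀ 0 + 1/2) / (min (1/2) (s a₀ b₀ 0) + 1/2)) ^ (2/3 : ℝ) := by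
    apply Real.rpow_le_rpow (by positivity) ?_ (by norm_num)
    apply div_le_div_of_nonneg_left (by linarith) (by linarith) ?_
    linarith [hsb.1]
  calc A a₀ b₀ τ ≤ a₀ * Real.exp (-12 * τ) * ((max (1/2) (s a₀ b₀ 0) / s a₀ b₀ 0) ^ (1/6 : ℝ))
        * (((s a₀ b₀ 0 + 1/2) / (min (1/2) (s a₀ b₀ 0) + 1/2)) ^ (2/3 : ℝ)) := by
        unfold A
        apply mul_le_mul ?_ h3 (by positivity) (by positivity)
        apply mul_le_mul le_rfl h2 (by positivity) (by positivity)
    _ = a₀ * Kc a₀ b₀ * Real.exp (-12 * τ) := by unfold Kc; ring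

lemma A_le {τ : ℝ} (hτ : 0 ≤ τ) : A a₀ b₀ τ ≤ a₀ * Kc a₀ b₀ := by
  have h := A_le' a₀ b₀ ha hb hτ
  have he1 : Real.exp (-12 * τ) ≤ 1 := Real.exp_le_one_iff.2 (by linarith)
  have hK := Kc_pos a₀ b₀ ha hb
  have h2 : a₀ * Kc a₀ b₀ * Real.exp (-12*τ) ≤ a₀ * Kc a₀ b₀ * 1 :=
    mul_le_mul_of_nonneg_left he1 (by positivity)
  linarith

noncomputable def cmin : ℝ := ((a₀ * Kc a₀ b₀)⁻¹) ^ 2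

lemma cmin_pos : 0 < cmin a₀ b₀ := by
  have := Kc_pos a₀ b₀ ha hb
  unfold cmin; positivity

lemma F_ge {τ : ℝ} (hτ : 0 ≤ τ) : cmin a₀ b₀ ≤ ((A a₀ b₀ τ)⁻¹) ^ 2 := by
  have h0 : τm a₀ b₀ < 0 := τm_neg a₀ b₀ ha hb
  have hA := A_pos a₀ b₀ ha hb (lt_of_lt_of_le h0 hτ)
  have hle := A_le a₀ b₀ ha hb hτ
  have hK := Kc_pos a₀ b₀ ha hb
  have : (a₀ * Kc a₀ b₀)⁻¹ ≤ (A a₀ b₀ τ)⁻¹ := inv_anti₀ hA hle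
  have h1 : 0 < (a₀ * Kc a₀ b₀)⁻¹ := by positivity
  unfold cmin
  exact pow_le_pow_left₀ h1.le this 2

lemma T_ge {τ : ℝ} (hτ : 0 ≤ τ) : cmin a₀ b₀ * τ ≤ T a₀ b₀ τ := by
  have h0 : τm a₀ b₀ < 0 := τm_neg a₀ b₀ ha hb
  have hint := intF a₀ b₀ ha hb h0 (lt_of_lt_of_le h0 hτ)
  have hc : IntervalIntegrable (fun _ : ℝ => cmin a₀ b₀) MeasureTheory.volume 0 τ :=
    intervalIntegrable_const
  have hmono := intervalIntegral.integral_mono_on hτ hc hint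
    (fun x hx => F_ge a₀ b₀ ha hb hx.1)
  rw [intervalIntegral.integral_const] at hmono
  have heq : cmin a₀ b₀ * τ = (τ - 0) • cmin a₀ b₀ := by simp [mul_comm]
  rw [heq]
  exact hmono

lemma T_tendsto : Tendsto (T a₀ b₀) atTop atTop := by
  apply tendsto_atTop_mono' atTop
    ((eventually_ge_atTop 0).mono fun τ hτ => T_ge a₀ b₀ ha hb hτ)
  exact Tendsto.const_mul_atTop (cmin_pos a₀ b₀ ha hb) tendsto_id


lemma contT : ContinuousOn (T a₀ b₀) (Ioi (τm a₀ b₀)) := fun τ hτ =>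
  ((hasDerivAt_T a₀ b₀ ha hb hτ).continuousAt).continuousWithinAt

omit ha hb in
lemma τ1_def : τm a₀ b₀ / 2 = τm a₀ b₀ / 2 := rfl

lemma exp_tendsto : Tendsto (fun τ : ℝ => Real.exp (-12 * τ)) atTop (nhds 0) := by
  have h : Tendsto (fun τ : ℝ => -12 * τ) atTop atBot :=
    (tendsto_const_mul_atBot_of_neg (by norm_num : (-12:ℝ) < 0)).2 tendsto_id
  exact Real.tendsto_exp_atBot.comp h

lemma A_tendsto : Tendsto (A a₀ b₀) atTop (nhds 0) := by
  apply squeeze_zero' ((eventually_ge_atTop 0).mono fun τ hτ =>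
      (A_pos a₀ b₀ ha hb (lt_of_lt_of_le (τm_neg a₀ b₀ ha hb) hτ)).le)
    ((eventually_ge_atTop 0).mono fun τ hτ => A_le' a₀ b₀ ha hb hτ)
  have h0 : Tendsto (fun τ : ℝ => a₀ * Kc a₀ b₀ * Real.exp (-12 * τ)) atTop
      (nhds (a₀ * Kc a₀ b₀ * 0)) := (exp_tendsto a₀ b₀ ha hb).const_mul _
  simpa using h0

lemma s_tendsto : Tendsto (s a₀ b₀) atTop (nhds (1/2)) := by
  have hw : Tendsto (w a₀ b₀) atTop (nhds (1/4)) := by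
    have h0 : Tendsto (fun τ : ℝ => 1/4 + Cc a₀ b₀ * Real.exp (-12 * τ)) atTop
        (nhds (1/4 + Cc a₀ b₀ * 0)) :=
      tendsto_const_nhds.add ((exp_tendsto a₀ b₀ ha hb).const_mul _)
    unfold w
    simpa using h0
  have hhalf : Real.sqrt (1/4) = 1/2 := by
    rw [show (1/4:ℝ) = (1/2)^2 by norm_num, Real.sqrt_sq (by norm_num : (0:ℝ) ≤ 1/2)]
  have := (Real.continuous_sqrt.tendsto (1/4 : ℝ)).comp hw
  rwa [hhalf] at this

lemma B_tendsto : Tendsto (B a₀ b₀) atTop (nhds 0) := by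
  have hm : 0 < min (1/2) (s a₀ b₀ 0) :=
    lt_min (by norm_num) (s_pos a₀ b₀ ha hb (τm_neg a₀ b₀ ha hb))
  have hBle : ∀ᶠ τ in atTop, B a₀ b₀ τ ≤ A a₀ b₀ τ / min (1/2) (s a₀ b₀ 0) := by
    filter_upwards [eventually_ge_atTop 0] with τ hτ
    have hτ' := lt_of_lt_of_le (τm_neg a₀ b₀ ha hb) hτ
    have hA := A_pos a₀ b₀ ha hb hτ'
    have hs := (s_bounds a₀ b₀ ha hb hτ).1
    unfold B
    gcongr
  apply squeeze_zero' ((eventually_ge_atTop 0).mono fun τ hτ =>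
      (B_pos a₀ b₀ ha hb (lt_of_lt_of_le (τm_neg a₀ b₀ ha hb) hτ)).le) hBle
  have := (A_tendsto a₀ b₀ ha hb).div_const (min (1/2) (s a₀ b₀ 0))
  simpa using this

end SCFEx

namespace SCFEx

noncomputable def τ1 (a₀ b₀ : ℝ) : ℝ := τm a₀ b₀ / 2

open scoped Classical in
noncomputable def g (a₀ b₀ : ℝ) (t : ℝ) : ℝ :=
  if h : ∃ σ, τ1 a₀ b₀ ≤ σ ∧ T a₀ b₀ σ = t then h.choose else τ1 a₀ b₀

variable (a₀ b₀ : ℝ) (ha : 0 < a₀) (hb : 0 < b₀)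
include ha hb

lemma τ1_neg : τ1 a₀ b₀ < 0 := by
  have := τm_neg a₀ b₀ ha hb; unfold τ1; linarith

lemma τm_lt_τ1 : τm a₀ b₀ < τ1 a₀ b₀ := by
  have := τm_neg a₀ b₀ ha hb; unfold τ1; linarith

lemma g_exists {t : ℝ} (ht : T a₀ b₀ (τ1 a₀ b₀) ≤ t) :
    ∃ σ, τ1 a₀ b₀ ≤ σ ∧ T a₀ b₀ σ = t := by
  obtain ⟨X, hX1, hX2⟩ :=
    (((T_tendsto a₀ b₀ ha hb).eventually_ge_atTop t).and
      (eventually_ge_atTop (τ1 a₀ b₀))).exists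
  have hsub : Icc (τ1 a₀ b₀) X ⊆ Ioi (τm a₀ b₀) := fun x hx =>
    lt_of_lt_of_le (τm_lt_τ1 a₀ b₀ ha hb) hx.1
  obtain ⟨σ, hσ1, hσ2⟩ := intermediate_value_Icc hX2
    ((contT a₀ b₀ ha hb).mono hsub) ⟨ht, hX1⟩
  exact ⟨σ, hσ1.1, hσ2⟩

lemma g_spec {t : ℝ} (ht : T a₀ b₀ (τ1 a₀ b₀) ≤ t) :
    τ1 a₀ b₀ ≤ g a₀ b₀ t ∧ T a₀ b₀ (g a₀ b₀ t) = t := by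
  have h := g_exists a₀ b₀ ha hb ht
  simp only [g, dif_pos h]
  exact h.choose_spec

lemma g_mem {t : ℝ} (ht : T a₀ b₀ (τ1 a₀ b₀) ≤ t) : g a₀ b₀ t ∈ Ioi (τm a₀ b₀) :=
  lt_of_lt_of_le (τm_lt_τ1 a₀ b₀ ha hb) (g_spec a₀ b₀ ha hb ht).1

lemma t1_neg : T a₀ b₀ (τ1 a₀ b₀) < 0 := by
  have h1 : τ1 a₀ b₀ ∈ Ioi (τm a₀ b₀) := τm_lt_τ1 a₀ b₀ ha hb
  have h0 : (0:ℝ) ∈ Ioi (τm a₀ b₀) := τm_neg a₀ b₀ ha hb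
  have := T_mono a₀ b₀ ha hb h1 h0 (τ1_neg a₀ b₀ ha hb)
  rwa [T_zero] at this

lemma g_zero : g a₀ b₀ 0 = 0 := by
  have hsp := g_spec a₀ b₀ ha hb (t1_neg a₀ b₀ ha hb).le
  have h0 : (0:ℝ) ∈ Ioi (τm a₀ b₀) := τm_neg a₀ b₀ ha hb
  apply (T_mono a₀ b₀ ha hb).injOn (g_mem a₀ b₀ ha hb (t1_neg a₀ b₀ ha hb).le) h0
  rw [hsp.2, T_zero]

lemma g_ge {t : ℝ} (ht : 0 ≤ t) : 0 ≤ g a₀ b₀ t := by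
  have ht1 : T a₀ b₀ (τ1 a₀ b₀) ≤ t := le_trans (t1_neg a₀ b₀ ha hb).le ht
  have hsp := g_spec a₀ b₀ ha hb ht1
  by_contra hneg
  push_neg at hneg
  have h0 : (0:ℝ) ∈ Ioi (τm a₀ b₀) := τm_neg a₀ b₀ ha hb
  have := T_mono a₀ b₀ ha hb (g_mem a₀ b₀ ha hb ht1) h0 hneg
  rw [hsp.2, T_zero] at this
  linarith

lemma g_cont {t : ℝ} (ht : 0 ≤ t) : ContinuousAt (g a₀ b₀) t := by
  have ht1' : T a₀ b₀ (τ1 a₀ b₀) < 0 := t1_neg a₀ b₀ ha hb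
  have ht1 : T a₀ b₀ (τ1 a₀ b₀) ≤ t := le_trans ht1'.le ht
  have hsp := g_spec a₀ b₀ ha hb ht1
  set σ := g a₀ b₀ t with hσdef
  have hσ0 : 0 ≤ σ := g_ge a₀ b₀ ha hb ht
  have hτ1neg := τ1_neg a₀ b₀ ha hb
  have hτmτ1 := τm_lt_τ1 a₀ b₀ ha hb
  rw [Metric.continuousAt_iff]
  intro ε hε
  set ε' := min ε (-(τ1 a₀ b₀)) with hε'def
  have hε' : 0 < ε' := lt_min hε (by linarith)
  have hε'ε : ε' ≤ ε := min_le_left _ _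
  have hlow : τ1 a₀ b₀ ≤ σ - ε' := by
    have : ε' ≤ -(τ1 a₀ b₀) := min_le_right _ _
    linarith
  have hmemlow : σ - ε' ∈ Ioi (τm a₀ b₀) := lt_of_lt_of_le hτmτ1 hlow
  have hmem : σ ∈ Ioi (τm a₀ b₀) := lt_of_lt_of_le hτmτ1 hsp.1
  have hmemhigh : σ + ε' ∈ Ioi (τm a₀ b₀) := by
    have : (τm a₀ b₀) < σ := hmem; exact lt_of_lt_of_le this (by linarith)
  have hTlow : T a₀ b₀ (σ - ε') < t := by
    have := T_mono a₀ b₀ ha hb hmemlow hmem (by linarith)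
    rwa [hsp.2] at this
  have hThigh : t < T a₀ b₀ (σ + ε') := by
    have := T_mono a₀ b₀ ha hb hmem hmemhigh (by linarith)
    rwa [hsp.2] at this
  refine ⟨min (t - T a₀ b₀ (σ - ε')) (T a₀ b₀ (σ + ε') - t),
    lt_min (by linarith) (by linarith), ?_⟩
  intro t' ht'
  rw [Real.dist_eq] at ht'
  have h1 : |t' - t| < t - T a₀ b₀ (σ - ε') := lt_of_lt_of_le ht' (min_le_left _ _)
  have h2 : |t' - t| < T a₀ b₀ (σ + ε') - t := lt_of_lt_of_le ht' (min_le_right _ _)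
  rw [abs_sub_lt_iff] at h1 h2
  have hlow' : T a₀ b₀ (σ - ε') < t' := by linarith
  have hhigh' : t' < T a₀ b₀ (σ + ε') := by linarith
  have ht'1 : T a₀ b₀ (τ1 a₀ b₀) ≤ t' := by
    rcases eq_or_lt_of_le hlow with h | h
    · rw [← h] at hlow'; linarith
    · have := T_mono a₀ b₀ ha hb hτmτ1 hmemlow h
      linarith
  have hsp' := g_spec a₀ b₀ ha hb ht'1
  have hmem' : g a₀ b₀ t' ∈ Ioi (τm a₀ b₀) := g_mem a₀ b₀ ha hb ht'1
  have hgt : σ - ε' < g a₀ b₀ t' := by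
    by_contra hc
    push_neg at hc
    rcases eq_or_lt_of_le hc with h | h
    · rw [← h, hsp'.2] at hlow'; linarith
    · have := T_mono a₀ b₀ ha hb hmem' hmemlow h
      rw [hsp'.2] at this; linarith
  have hlt : g a₀ b₀ t' < σ + ε' := by
    by_contra hc
    push_neg at hc
    rcases eq_or_lt_of_le hc with h | h
    · rw [h, hsp'.2] at hhigh'; linarith
    · have := T_mono a₀ b₀ ha hb hmemhigh hmem' h
      rw [hsp'.2] at this; linarith
  rw [Real.dist_eq, abs_sub_lt_iff]
  constructor <;> [skip; skip] <;> rw [← hσdef] <;> linarith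

lemma g_hasDerivAt {t : ℝ} (ht : 0 ≤ t) :
    HasDerivAt (g a₀ b₀) ((((A a₀ b₀ (g a₀ b₀ t))⁻¹) ^ 2)⁻¹) t := by
  have ht1' : T a₀ b₀ (τ1 a₀ b₀) < 0 := t1_neg a₀ b₀ ha hb
  have ht1 : T a₀ b₀ (τ1 a₀ b₀) ≤ t := le_trans ht1'.le ht
  have hmem := g_mem a₀ b₀ ha hb ht1
  have hApos := A_pos a₀ b₀ ha hb hmem
  refine HasDerivAt.of_local_left_inverse (g_cont a₀ b₀ ha hb ht)
    (hasDerivAt_T a₀ b₀ ha hb hmem) (by positivity) ?_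
  have hev : ∀ᶠ y in nhds t, T a₀ b₀ (τ1 a₀ b₀) < y :=
    eventually_gt_nhds (lt_of_lt_of_le ht1' ht)
  exact hev.mono fun y hy => (g_spec a₀ b₀ ha hb hy.le).2

lemma g_tendsto : Tendsto (g a₀ b₀) atTop atTop := by
  rw [tendsto_atTop]
  intro M
  set M' := max M 0 with hM'
  have hM'mem : M' ∈ Ioi (τm a₀ b₀) :=
    lt_of_lt_of_le (τm_neg a₀ b₀ ha hb) (le_max_right _ _)
  filter_upwards [eventually_ge_atTop (max (T a₀ b₀ (τ1 a₀ b₀)) (T a₀ b₀ M'))] with t htt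
  have ht1 : T a₀ b₀ (τ1 a₀ b₀) ≤ t := le_trans (le_max_left _ _) htt
  have hsp := g_spec a₀ b₀ ha hb ht1
  have hmem := g_mem a₀ b₀ ha hb ht1
  have : M' ≤ g a₀ b₀ t := by
    by_contra hc
    push_neg at hc
    have := T_mono a₀ b₀ ha hb hmem hM'mem hc
    rw [hsp.2] at this
    have := le_trans (le_max_right _ _) htt
    linarith
  exact le_trans (le_max_left _ _) this


lemma main_deriv_a {t : ℝ} (ht : 0 ≤ t) :
    HasDerivAt (fun t => A a₀ b₀ (g a₀ b₀ t))
      ((-9*(A a₀ b₀ (g a₀ b₀ t))^2 + (1/4)*(B a₀ b₀ (g a₀ b₀ t))^2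
        - 2*(A a₀ b₀ (g a₀ b₀ t))*(B a₀ b₀ (g a₀ b₀ t))) * A a₀ b₀ (g a₀ b₀ t)) t := by
  have ht1 : T a₀ b₀ (τ1 a₀ b₀) ≤ t := (t1_neg a₀ b₀ ha hb).le.trans ht
  have hmem := g_mem a₀ b₀ ha hb ht1
  have hA := A_pos a₀ b₀ ha hb hmem
  have hs := s_pos a₀ b₀ ha hb hmem
  have hchain := (hasDerivAt_A a₀ b₀ ha hb hmem).comp t (g_hasDerivAt a₀ b₀ ha hb ht)
  refine hchain.congr_deriv (Eq.symm ?_)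
  have hinv : (((A a₀ b₀ (g a₀ b₀ t))⁻¹)^2)⁻¹ = (A a₀ b₀ (g a₀ b₀ t))^2 := by
    rw [inv_pow, inv_inv]
  have hBeq : B a₀ b₀ (g a₀ b₀ t) = A a₀ b₀ (g a₀ b₀ t) / s a₀ b₀ (g a₀ b₀ t) := rfl
  rw [hinv, hBeq]
  exact (id1 (A a₀ b₀ (g a₀ b₀ t)) (s a₀ b₀ (g a₀ b₀ t)) (sd a₀ b₀ (g a₀ b₀ t))
    hs.ne' (by linarith) rfl).symm

lemma main_deriv_b {t : ℝ} (ht : 0 ≤ t) :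
    HasDerivAt (fun t => B a₀ b₀ (g a₀ b₀ t))
      ((-3*(A a₀ b₀ (g a₀ b₀ t))^2 - (5/4)*(B a₀ b₀ (g a₀ b₀ t))^2
        - 2*(A a₀ b₀ (g a₀ b₀ t))*(B a₀ b₀ (g a₀ b₀ t))) * B a₀ b₀ (g a₀ b₀ t)) t := by
  have ht1 : T a₀ b₀ (τ1 a₀ b₀) ≤ t := (t1_neg a₀ b₀ ha hb).le.trans ht
  have hmem := g_mem a₀ b₀ ha hb ht1
  have hA := A_pos a₀ b₀ ha hb hmem
  have hs := s_pos a₀ b₀ ha hb hmem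
  have hchain := (hasDerivAt_B a₀ b₀ ha hb hmem).comp t (g_hasDerivAt a₀ b₀ ha hb ht)
  refine hchain.congr_deriv (Eq.symm ?_)
  have hinv : (((A a₀ b₀ (g a₀ b₀ t))⁻¹)^2)⁻¹ = (A a₀ b₀ (g a₀ b₀ t))^2 := by
    rw [inv_pow, inv_inv]
  have hBeq : B a₀ b₀ (g a₀ b₀ t) = A a₀ b₀ (g a₀ b₀ t) / s a₀ b₀ (g a₀ b₀ t) := rfl
  rw [hinv, hBeq]
  exact (id2 (A a₀ b₀ (g a₀ b₀ t)) (s a₀ b₀ (g a₀ b₀ t)) (sd a₀ b₀ (g a₀ b₀ t))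
    hs.ne' (by linarith) rfl).symm

lemma norm_eq {t : ℝ} (ht : 0 ≤ t) :
    (A a₀ b₀ (g a₀ b₀ t) / Real.sqrt ((A a₀ b₀ (g a₀ b₀ t))^2 + (B a₀ b₀ (g a₀ b₀ t))^2),
     B a₀ b₀ (g a₀ b₀ t) / Real.sqrt ((A a₀ b₀ (g a₀ b₀ t))^2 + (B a₀ b₀ (g a₀ b₀ t))^2))
      = (s a₀ b₀ (g a₀ b₀ t) / Real.sqrt ((s a₀ b₀ (g a₀ b₀ t))^2 + 1),
         1 / Real.sqrt ((s a₀ b₀ (g a₀ b₀ t))^2 + 1)) := by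
  have ht1 : T a₀ b₀ (τ1 a₀ b₀) ≤ t := (t1_neg a₀ b₀ ha hb).le.trans ht
  have hmem := g_mem a₀ b₀ ha hb ht1
  have hA := A_pos a₀ b₀ ha hb hmem
  have hy := s_pos a₀ b₀ ha hb hmem
  set σ := g a₀ b₀ t
  set y := s a₀ b₀ σ with hydef
  have hyy : 0 < y ^ 2 + 1 := by positivity
  have hrt : 0 < Real.sqrt (y ^ 2 + 1) := Real.sqrt_pos.2 hyy
  have h1 : (Real.sqrt (y^2+1))^2 = y^2+1 := Real.sq_sqrt hyy.le
  have hBy : B a₀ b₀ σ = A a₀ b₀ σ / y := rfl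
  have hsq : Real.sqrt ((A a₀ b₀ σ)^2 + (B a₀ b₀ σ)^2)
      = A a₀ b₀ σ * Real.sqrt (y^2+1) / y := by
    rw [hBy]
    rw [show (A a₀ b₀ σ)^2 + (A a₀ b₀ σ / y)^2 = (A a₀ b₀ σ * Real.sqrt (y^2+1) / y)^2 from ?_]
    · exact Real.sqrt_sq (by positivity)
    · rw [div_pow, div_pow, mul_pow, h1]
      field_simp
  rw [hsq, hBy]
  refine Prod.ext ?_ ?_ <;> simp only [] <;> field_simp <;> try ring

lemma norm_tendsto :
    Tendsto (fun t => (s a₀ b₀ (g a₀ b₀ t) / Real.sqrt ((s a₀ b₀ (g a₀ b₀ t))^2 + 1),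
        1 / Real.sqrt ((s a₀ b₀ (g a₀ b₀ t))^2 + 1))) atTop
      (nhds (1 / Real.sqrt 5, 2 / Real.sqrt 5)) := by
  have hsg : Tendsto (fun t => s a₀ b₀ (g a₀ b₀ t)) atTop (nhds (1/2)) :=
    (s_tendsto a₀ b₀ ha hb).comp (g_tendsto a₀ b₀ ha hb)
  have hq : Tendsto (fun t => Real.sqrt ((s a₀ b₀ (g a₀ b₀ t))^2 + 1)) atTop
      (nhds (Real.sqrt (((1:ℝ)/2)^2 + 1))) :=
    (Real.continuous_sqrt.tendsto _).comp ((hsg.pow 2).add tendsto_const_nhds)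
  have h5pos : 0 < Real.sqrt 5 := Real.sqrt_pos.2 (by norm_num)
  have h54 : Real.sqrt (((1:ℝ)/2)^2 + 1) = Real.sqrt 5 / 2 := by
    rw [show ((1:ℝ)/2)^2 + 1 = 5 * (1/2)^2 by norm_num, Real.sqrt_mul (by norm_num) _,
      Real.sqrt_sq (by norm_num : (0:ℝ) ≤ 1/2)]
    ring
  have hne : Real.sqrt (((1:ℝ)/2)^2 + 1) ≠ 0 := by rw [h54]; positivity
  have h1 := hsg.div hq hne
  have h2 := (tendsto_const_nhds (x := (1:ℝ))).div hq hne
  rw [h54] at h1 h2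
  have e1 : (1/2 : ℝ) / (Real.sqrt 5 / 2) = 1 / Real.sqrt 5 := by
    field_simp
  have e2 : (1 : ℝ) / (Real.sqrt 5 / 2) = 2 / Real.sqrt 5 := by
    field_simp
  rw [e1] at h1
  rw [e2] at h2
  exact h1.prodMk_nhds h2

theorem main :
    ∃ a b : ℝ → ℝ, a 0 = a₀ ∧ b 0 = b₀ ∧
      (∀ t : ℝ, 0 ≤ t →
        HasDerivAt a ((-9*(a t)^2 + (1/4)*(b t)^2 - 2*(a t)*(b t)) * a t) t ∧
        HasDerivAt b ((-3*(a t)^2 - (5/4)*(b t)^2 - 2*(a t)*(b t)) * b t) t) ∧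
      (∀ t : ℝ, 0 ≤ t → 0 < a t ∧ 0 < b t) ∧
      Filter.Tendsto (fun t => (a t, b t)) Filter.atTop (nhds (0, 0)) ∧
      Filter.Tendsto
        (fun t => (a t / Real.sqrt ((a t)^2 + (b t)^2),
                   b t / Real.sqrt ((a t)^2 + (b t)^2)))
        Filter.atTop (nhds (1 / Real.sqrt 5, 2 / Real.sqrt 5)) := by
  refine ⟨fun t => A a₀ b₀ (g a₀ b₀ t), fun t => B a₀ b₀ (g a₀ b₀ t), ?_, ?_,
    fun t ht => ⟨main_deriv_a a₀ b₀ ha hb ht, main_deriv_b a₀ b₀ ha hb ht⟩,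
    fun t ht => ⟨A_pos a₀ b₀ ha hb (g_mem a₀ b₀ ha hb ((t1_neg a₀ b₀ ha hb).le.trans ht)),
      B_pos a₀ b₀ ha hb (g_mem a₀ b₀ ha hb ((t1_neg a₀ b₀ ha hb).le.trans ht))⟩, ?_, ?_⟩
  · show A a₀ b₀ (g a₀ b₀ 0) = a₀
    rw [g_zero a₀ b₀ ha hb, A_zero a₀ b₀ ha hb]
  · show B a₀ b₀ (g a₀ b₀ 0) = b₀
    rw [g_zero a₀ b₀ ha hb, B_zero a₀ b₀ ha hb]
  · exact ((A_tendsto a₀ b₀ ha hb).comp (g_tendsto a₀ b₀ ha hb)).prodMk_nhds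
      ((B_tendsto a₀ b₀ ha hb).comp (g_tendsto a₀ b₀ ha hb))
  · refine (norm_tendsto a₀ b₀ ha hb).congr' ?_
    filter_upwards [eventually_ge_atTop 0] with t ht
    exact (norm_eq a₀ b₀ ha hb ht).symm

end SCFEx



/-- Example 8.3 of the paper: the bracket flow ODE system
`a' = (-9a² + (1/4)b² - 2ab)a`, `b' = (-3a² - (5/4)b² - 2ab)b` with `a₀, b₀ > 0` has a
solution defined for all `t ≥ 0`, staying in the open first quadrant, converging to
`(0,0)`, with normalized solution converging to `(1,2)/√5` as `t → ∞`. -/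
theorem scf_solvable_example (a₀ b₀ : ℝ) (ha₀ : 0 < a₀) (hb₀ : 0 < b₀) :
    ∃ a b : ℝ → ℝ, a 0 = a₀ ∧ b 0 = b₀ ∧
      (∀ t : ℝ, 0 ≤ t →
        HasDerivAt a ((-9*(a t)^2 + (1/4)*(b t)^2 - 2*(a t)*(b t)) * a t) t ∧
        HasDerivAt b ((-3*(a t)^2 - (5/4)*(b t)^2 - 2*(a t)*(b t)) * b t) t) ∧
      (∀ t : ℝ, 0 ≤ t → 0 < a t ∧ 0 < b t) ∧
      Filter.Tendsto (fun t => (a t, b t)) Filter.atTop (nhds (0, 0)) ∧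
      Filter.Tendsto
        (fun t => (a t / Real.sqrt ((a t)^2 + (b t)^2),
                   b t / Real.sqrt ((a t)^2 + (b t)^2)))
        Filter.atTop (nhds (1 / Real.sqrt 5, 2 / Real.sqrt 5)) := by
  exact SCFEx.main a₀ b₀ ha₀ hb₀
end
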